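/- arXiv:2503.24141 — 11 statements merged into one kernel-verified Lean document; each statement's English description precedes it below -/
import Mathlib

section
/- Let X and Y be real Hilbert spaces and A, V : X → Y bounded linear operators. Let τ > 0 satisfy τ·‖A − V‖ < 1, where ‖A − V‖ is the operator norm. Then the bounded linear map T : X × Y → X × Y defined by T(v, w) = (v + τ·V*(w), w − τ·A(v)) is bijective. -/
open scoped RealInnerProductSpace

/-- The linear system solved in each step of the primal-dual Douglas–Rachford method
with mismatched adjoint is invertible when `τ‖A − V‖ < 1`. -/
theorem pddr_linear_system_bijective
    {X Y : Type*} [NormedAddCommGroup X] [InnerProductSpace ℝ X] [CompleteSpace X]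
    [NormedAddCommGroup Y] [InnerProductSpace ℝ Y] [CompleteSpace Y]
    (A V : X →L[ℝ] Y) (τ : ℝ) (hτ : 0 < τ) (hsmall : τ * ‖A - V‖ < 1) :
    Function.Bijective (fun vw : X × Y =>
      (vw.1 + τ • (ContinuousLinearMap.adjoint V) vw.2, vw.2 - τ • A vw.1)) := by
  classical
  set Vs := ContinuousLinearMap.adjoint V with hVs
  let e : WithLp 2 (X × Y) ≃L[ℝ] X × Y := WithLp.prodContinuousLinearEquiv 2 ℝ X Y
  let T' : X × Y →L[ℝ] X × Y :=
    ((ContinuousLinearMap.fst ℝ X Y) + τ • Vs.comp (ContinuousLinearMap.snd ℝ X Y)).prod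
      ((ContinuousLinearMap.snd ℝ X Y) - τ • A.comp (ContinuousLinearMap.fst ℝ X Y))
  let T : WithLp 2 (X × Y) →L[ℝ] WithLp 2 (X × Y) :=
    (e.symm.toContinuousLinearMap.comp T').comp e.toContinuousLinearMap
  have hTfst : ∀ z : WithLp 2 (X × Y), (T z).fst = z.fst + τ • Vs z.snd := fun z => rfl
  have hTsnd : ∀ z : WithLp 2 (X × Y), (T z).snd = z.snd - τ • A z.fst := fun z => rfl
  -- the associated bilinear form
  let B : WithLp 2 (X × Y) →L[ℝ] WithLp 2 (X × Y) →L[ℝ] ℝ :=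
    (innerSL ℝ).comp T
  have hB : ∀ u w : WithLp 2 (X × Y), B u w = ⟪T u, w⟫ := fun u w => rfl
  have hABnn : 0 ≤ ‖A - V‖ := norm_nonneg _
  -- coercivity estimate
  have key : ∀ z : WithLp 2 (X × Y),
      (1 - τ * ‖A - V‖ / 2) * ‖z‖ * ‖z‖ ≤ B z z := by
    intro z
    have hz2 : ‖z‖ ^ 2 = ‖z.fst‖ ^ 2 + ‖z.snd‖ ^ 2 := z.prod_norm_sq_eq_of_L2
    have hinner : B z z = ‖z.fst‖ ^ 2 + ‖z.snd‖ ^ 2 - τ * ⟪(A - V) z.fst, z.snd⟫ := by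
      rw [hB, WithLp.prod_inner_apply]
      change ⟪(T z).fst, z.fst⟫ + ⟪(T z).snd, z.snd⟫ = _
      rw [hTfst, hTsnd]
      rw [inner_add_left, inner_sub_left, inner_smul_left, inner_smul_left]
      have h1 : ⟪Vs z.snd, z.fst⟫ = ⟪V z.fst, z.snd⟫ := by
        rw [hVs, ContinuousLinearMap.adjoint_inner_left, real_inner_comm]
      rw [h1, real_inner_self_eq_norm_sq, real_inner_self_eq_norm_sq]
      simp only [ContinuousLinearMap.sub_apply, inner_sub_left, RCLike.conj_to_real]
      ring
    have hcs : ⟪(A - V) z.fst, z.snd⟫ ≤ ‖A - V‖ * ‖z.fst‖ * ‖z.snd‖ := by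
      calc ⟪(A - V) z.fst, z.snd⟫ ≤ ‖(A - V) z.fst‖ * ‖z.snd‖ := real_inner_le_norm _ _
        _ ≤ ‖A - V‖ * ‖z.fst‖ * ‖z.snd‖ :=
          mul_le_mul_of_nonneg_right ((A - V).le_opNorm _) (norm_nonneg _)
    have hfw : ‖z.fst‖ * ‖z.snd‖ ≤ (‖z.fst‖ ^ 2 + ‖z.snd‖ ^ 2) / 2 := by
      nlinarith [sq_nonneg (‖z.fst‖ - ‖z.snd‖)]
    have hτAB : 0 ≤ τ * ‖A - V‖ := mul_nonneg hτ.le hABnn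
    calc (1 - τ * ‖A - V‖ / 2) * ‖z‖ * ‖z‖
        = ‖z‖ ^ 2 - τ * ‖A - V‖ / 2 * ‖z‖ ^ 2 := by ring
      _ = (‖z.fst‖ ^ 2 + ‖z.snd‖ ^ 2) - τ * ‖A - V‖ / 2 * (‖z.fst‖ ^ 2 + ‖z.snd‖ ^ 2) := by
          rw [hz2]
      _ ≤ (‖z.fst‖ ^ 2 + ‖z.snd‖ ^ 2) - τ * (‖A - V‖ * ‖z.fst‖ * ‖z.snd‖) := by nlinarith
      _ ≤ (‖z.fst‖ ^ 2 + ‖z.snd‖ ^ 2) - τ * ⟪(A - V) z.fst, z.snd⟫ := by nlinarith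
      _ = B z z := hinner.symm
  have hC : (0:ℝ) < 1 - τ * ‖A - V‖ / 2 := by nlinarith
  have coercive : IsCoercive B := ⟨1 - τ * ‖A - V‖ / 2, hC, key⟩
  -- the Lax–Milgram equivalence coincides with T
  have heq : ∀ u, coercive.continuousLinearEquivOfBilin u = T u := by
    intro u
    apply ext_inner_left ℝ
    intro w
    rw [real_inner_comm, coercive.continuousLinearEquivOfBilin_apply, hB, real_inner_comm]
  have hTbij : Function.Bijective (⇑T) := by
    have := coercive.continuousLinearEquivOfBilin.bijective
    have hfun : ⇑coercive.continuousLinearEquivOfBilin = ⇑T := funext heq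
    rwa [hfun] at this
  have hfeq : (fun vw : X × Y =>
      (vw.1 + τ • Vs vw.2, vw.2 - τ • A vw.1)) = ⇑e ∘ ⇑T ∘ ⇑e.symm := rfl
  rw [hfeq]
  exact e.bijective.comp (hTbij.comp e.symm.bijective)
end

section
/- Let X and Y be real Hilbert spaces, A, V : X → Y bounded linear operators, G : X → ℝ and F* : Y → ℝ functions, and τ > 0. For x̂ ∈ X and ŷ ∈ Y the following are equivalent: (i) there exist p̂, v̂ ∈ X and q̂, ŵ ∈ Y such that (1/τ)·(p̂ − x̂) is a subgradient of G at x̂, (1/τ)·(q̂ − ŷ) is a subgradient of F* at ŷ, v̂ + τ·V*(ŵ) = 2x̂ − p̂, ŵ − τ·A(v̂) = 2ŷ − q̂, v̂ = x̂ and ŵ = ŷ; (ii) −V*(ŷ) is a subgradient of G at x̂ and A(x̂) is a subgradient of F* at ŷ. -/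
open scoped RealInnerProductSpace

/-- `g` is a subgradient of `f` at `x`. -/
def IsSubgradientAt {E : Type*} [NormedAddCommGroup E] [InnerProductSpace ℝ E]
    (f : E → ℝ) (g x : E) : Prop :=
  ∀ z, f x + ⟪g, z - x⟫ ≤ f z

/-- Characterization of the fixed points of the primal-dual Douglas–Rachford method with
mismatched adjoint: they are exactly the solutions of the mismatched optimality inclusion
`0 ∈ ∂G(x̂) + V*ŷ`, `0 ∈ ∂F*(ŷ) − Ax̂`. -/
theorem pddr_mismatch_fixed_point_characterization
    {X Y : Type*} [NormedAddCommGroup X] [InnerProductSpace ℝ X] [CompleteSpace X]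
    [NormedAddCommGroup Y] [InnerProductSpace ℝ Y] [CompleteSpace Y]
    (A V : X →L[ℝ] Y) (G : X → ℝ) (Fs : Y → ℝ) (τ : ℝ) (hτ : 0 < τ)
    (xh : X) (yh : Y) :
    (∃ (ph vh : X) (qh wh : Y),
        IsSubgradientAt G ((1 / τ) • (ph - xh)) xh ∧
        IsSubgradientAt Fs ((1 / τ) • (qh - yh)) yh ∧
        vh + τ • (ContinuousLinearMap.adjoint V) wh = (2 : ℝ) • xh - ph ∧
        wh - τ • A vh = (2 : ℝ) • yh - qh ∧
        vh = xh ∧ wh = yh) ↔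
      (IsSubgradientAt G (-(ContinuousLinearMap.adjoint V) yh) xh ∧
        IsSubgradientAt Fs (A xh) yh) := by
  have hτ' : τ ≠ 0 := ne_of_gt hτ
  constructor
  · rintro ⟨ph, vh, qh, wh, hG, hF, h1, h2, rfl, rfl⟩
    have hp : ph - vh = -(τ • (ContinuousLinearMap.adjoint V) wh) := by
      have := h1
      rw [two_smul] at this
      linear_combination (norm := module) this
    have hq : qh - wh = τ • A vh := by
      rw [two_smul] at h2
      linear_combination (norm := module) h2
    constructor
    · have : (1 / τ) • (ph - vh) = -(ContinuousLinearMap.adjoint V) wh := by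
        rw [hp, smul_neg, smul_smul, one_div, inv_mul_cancel₀ hτ', one_smul]
      rwa [this] at hG
    · have : (1 / τ) • (qh - wh) = A vh := by
        rw [hq, smul_smul, one_div, inv_mul_cancel₀ hτ', one_smul]
      rwa [this] at hF
  · rintro ⟨hG, hF⟩
    refine ⟨xh - τ • (ContinuousLinearMap.adjoint V) yh, xh,
      yh + τ • A xh, yh, ?_, ?_, ?_, ?_, rfl, rfl⟩
    · have : (1 / τ) • (xh - τ • (ContinuousLinearMap.adjoint V) yh - xh)
        = -(ContinuousLinearMap.adjoint V) yh := by
        rw [sub_sub_cancel_left, smul_neg, smul_smul, one_div,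
          inv_mul_cancel₀ hτ', one_smul]
      rwa [this]
    · have : (1 / τ) • (yh + τ • A xh - yh) = A xh := by
        rw [add_sub_cancel_left, smul_smul, one_div, inv_mul_cancel₀ hτ', one_smul]
      rwa [this]
    · rw [two_smul]; abel
    · rw [two_smul]; abel
end

section
/- Let X and Y be real Hilbert spaces, A, V : X → Y bounded linear operators, G : X → ℝ a γ_G-strongly convex lower semicontinuous function and F* : Y → ℝ a γ_{F*}-strongly convex lower semicontinuous function, with γ_G · γ_{F*} > (1/4)·‖A − V‖². Then there exist x̂ ∈ X, ŷ ∈ Y, g ∈ X and f ∈ Y such that g is a subgradient of G at x̂, f is a subgradient of F* at ŷ, g + V*(ŷ) = 0, and f = A(x̂). -/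
open scoped RealInnerProductSpace

/-- `f` is `γ`-strongly convex: `x ↦ f x − (γ/2)‖x‖²` is convex. -/
def IsStronglyConvex {E : Type*} [NormedAddCommGroup E] [InnerProductSpace ℝ E]
    (γ : ℝ) (f : E → ℝ) : Prop :=
  0 < γ ∧ ConvexOn ℝ Set.univ (fun x => f x - γ / 2 * ‖x‖ ^ 2)

section Helpers

variable {E : Type*} [NormedAddCommGroup E] [InnerProductSpace ℝ E]

lemma norm_sq_combo (a b : E) (s t : ℝ) (hst : s + t = 1) :
    ‖s • a + t • b‖ ^ 2 = s * ‖a‖ ^ 2 + t * ‖b‖ ^ 2 - s * t * ‖a - b‖ ^ 2 := by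
  have h1 : ‖s • a + t • b‖ ^ 2 = ⟪s • a + t • b, s • a + t • b⟫ :=
    (real_inner_self_eq_norm_sq _).symm
  have h2 : ‖a‖ ^ 2 = ⟪a, a⟫ := (real_inner_self_eq_norm_sq _).symm
  have h3 : ‖b‖ ^ 2 = ⟪b, b⟫ := (real_inner_self_eq_norm_sq _).symm
  have h4 : ‖a - b‖ ^ 2 = ⟪a - b, a - b⟫ := (real_inner_self_eq_norm_sq _).symm
  rw [h1, h2, h3, h4]
  simp only [inner_add_add_self, inner_sub_sub_self, real_inner_smul_left,
    real_inner_smul_right, real_inner_comm a b]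
  have : s = 1 - t := by linarith
  subst this
  ring

lemma sc_combo {γ : ℝ} {f : E → ℝ} (hf : IsStronglyConvex γ f) (a b : E) {s t : ℝ}
    (hs : 0 ≤ s) (ht : 0 ≤ t) (hst : s + t = 1) :
    f (s • a + t • b) ≤ s * f a + t * f b - γ / 2 * (s * t) * ‖a - b‖ ^ 2 := by
  have h := hf.2.2 (Set.mem_univ a) (Set.mem_univ b) hs ht hst
  simp only [smul_eq_mul] at h
  have hn := norm_sq_combo a b s t hst
  rw [hn] at h
  linarith

end Helpers
section Helpers2

open Filter Topology

variable {E : Type*} [NormedAddCommGroup E] [InnerProductSpace ℝ E]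

/-- A global minimizer of a strongly convex function satisfies the strong minimum
inequality. -/
lemma strong_min {γ : ℝ} {f : E → ℝ} (hf : IsStronglyConvex γ f) {x : E}
    (hx : ∀ z, f x ≤ f z) (z : E) : f x + γ / 2 * ‖z - x‖ ^ 2 ≤ f z := by
  have hγ := hf.1
  have hd : (0:ℝ) ≤ ‖z - x‖ ^ 2 := by positivity
  have hxz : ‖x - z‖ ^ 2 = ‖z - x‖ ^ 2 := by rw [norm_sub_rev]
  -- for every t ∈ (0,1], f x ≤ f z - γ/2 (1-t) ‖z-x‖²
  have key : ∀ t : ℝ, 0 < t → t ≤ 1 →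
      f x ≤ f z - γ / 2 * (1 - t) * ‖z - x‖ ^ 2 := by
    intro t ht0 ht1
    have hc := sc_combo hf x z (s := 1 - t) (t := t) (by linarith) (le_of_lt ht0)
      (by ring)
    rw [hxz] at hc
    have hmin := hx ((1 - t) • x + t • z)
    have h5 : t * f x ≤ t * (f z - γ / 2 * (1 - t) * ‖z - x‖ ^ 2) := by nlinarith
    exact le_of_mul_le_mul_left h5 ht0
  -- take t = 1/(n+1) → 0
  have h0 : Tendsto (fun n : ℕ => (1:ℝ) / (n + 1)) atTop (𝓝 0) :=
    tendsto_one_div_add_atTop_nhds_zero_nat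
  have hc : Continuous (fun u : ℝ => f z - γ / 2 * (1 - u) * ‖z - x‖ ^ 2) := by
    continuity
  have hlim : Tendsto (fun n : ℕ => f z - γ / 2 * (1 - 1 / (n + 1)) * ‖z - x‖ ^ 2)
      atTop (𝓝 (f z - γ / 2 * (1 - 0) * ‖z - x‖ ^ 2)) :=
    (hc.tendsto 0).comp h0
  have hle : f x ≤ f z - γ / 2 * (1 - 0) * ‖z - x‖ ^ 2 :=
    ge_of_tendsto' hlim fun n => by
      refine key _ (by positivity) ?_
      rw [div_le_one (by positivity)]
      linarith [Nat.cast_nonneg (α := ℝ) n]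
  linarith

/-- sum of lsc and continuous is lsc -/
lemma lsc_add_cont {f g : E → ℝ} (hf : LowerSemicontinuous f) (hg : Continuous g) :
    LowerSemicontinuous fun x => f x + g x := by
  intro x y hy
  have hy' : y < f x + g x := hy
  set ε := (f x + g x - y) / 2 with hε
  have hεpos : 0 < ε := by simp only [hε]; linarith
  have h1 : ∀ᶠ x' in 𝓝 x, f x - ε < f x' := by
    rcases lt_or_ge (f x - ε) (f x) with h | h
    · exact hf x _ h
    · exact Filter.Eventually.of_forall fun x' => by linarith [hf x]; 
  have h2 : ∀ᶠ x' in 𝓝 x, g x - ε < g x' := by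
    have : Tendsto g (𝓝 x) (𝓝 (g x)) := hg.tendsto x
    exact this.eventually (eventually_gt_nhds (by linarith))
  filter_upwards [h1, h2] with x' hx1 hx2
  have : y = f x - ε + (g x - ε) := by simp only [hε]; ring
  rw [this]; exact add_lt_add hx1 hx2

end Helpers2
section ExistsMin

open Filter Topology Metric

variable {E : Type*} [NormedAddCommGroup E] [InnerProductSpace ℝ E] [CompleteSpace E]

/-- A strongly convex lsc real function on a Hilbert space is bounded below. -/
lemma sc_bddBelow {γ : ℝ} {f : E → ℝ} (hf : IsStronglyConvex γ f)
    (hlsc : LowerSemicontinuous f) : ∃ m : ℝ, ∀ x, m ≤ f x := by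
  have hγ := hf.1
  -- Baire: some sublevel set has nonempty interior
  obtain ⟨n, z, hz⟩ : ∃ (n : ℕ) (z : E), z ∈ interior {x | f x ≤ n} := by
    have hC : ∀ n : ℕ, IsClosed {x : E | f x ≤ (n:ℝ)} := fun n =>
      hlsc.isClosed_preimage (n : ℝ)
    have hU : (⋃ n : ℕ, {x : E | f x ≤ (n:ℝ)}) = Set.univ := by
      ext x
      simp only [Set.mem_iUnion, Set.mem_setOf_eq, Set.mem_univ, iff_true]
      obtain ⟨n, hn⟩ := exists_nat_ge (f x)
      exact ⟨n, hn⟩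
    obtain ⟨n, hn⟩ := nonempty_interior_of_iUnion_of_closed hC hU
    obtain ⟨z, hz⟩ := hn
    exact ⟨n, z, hz⟩
  obtain ⟨r, hr, hball⟩ := Metric.isOpen_iff.1 isOpen_interior z hz
  have hsub : ball z r ⊆ {x | f x ≤ (n:ℝ)} := hball.trans interior_subset
  set ρ := r / 2 with hρ
  have hρpos : 0 < ρ := by positivity
  have hub : ∀ x : E, ‖x - z‖ ≤ ρ → f x ≤ n := by
    intro x hx
    apply hsub
    rw [mem_ball, dist_eq_norm]
    linarith
  have hfz : f z ≤ n := hub z (by simp [hρpos.le])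
  -- lower bound on the ball
  have hlb : ∀ x : E, ‖x - z‖ ≤ ρ → 2 * f z - n ≤ f x := by
    intro x hx
    have hx2 : ‖(2 • z - x) - z‖ ≤ ρ := by
      have : (2:ℕ) • z - x - z = z - x := by
        rw [two_smul]; abel
      rw [this, norm_sub_rev]; exact hx
    have hub2 := hub _ hx2
    have hcomb := sc_combo hf x (2 • z - x) (s := 1/2) (t := 1/2)
      (by norm_num) (by norm_num) (by norm_num)
    have hmid : (1/2 : ℝ) • x + (1/2 : ℝ) • ((2:ℕ) • z - x) = z := by
      rw [two_smul, smul_sub, smul_add]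
      module
    rw [hmid] at hcomb
    nlinarith [sq_nonneg ‖x - (2 • z - x)‖, hf.1]
  -- global lower bound
  set C := ((n:ℝ) - f z) / ρ + γ * ρ / 2 with hC
  have hCpos : 0 ≤ C := by
    have h1 : 0 ≤ ((n:ℝ) - f z) / ρ := div_nonneg (by linarith) hρpos.le
    have h2 : 0 ≤ γ * ρ / 2 := by positivity
    rw [hC]; linarith
  refine ⟨min (2 * f z - n) (f z - C ^ 2 / (2 * γ)), fun x => ?_⟩
  rcases le_or_gt ‖x - z‖ ρ with hcase | hcase
  · exact le_trans (min_le_left _ _) (hlb x hcase)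
  · set d := ‖x - z‖ with hd
    have hdpos : 0 < d := lt_trans hρpos hcase
    set t := ρ / d with ht
    have ht0 : 0 < t := div_pos hρpos hdpos
    have ht1 : t < 1 := (div_lt_one hdpos).2 hcase
    have hcomb := sc_combo hf z x (s := 1 - t) (t := t) (by linarith) ht0.le
      (by ring)
    have hw : ‖((1 - t) • z + t • x) - z‖ ≤ ρ := by
      have : ((1 - t) • z + t • x) - z = t • (x - z) := by
        rw [smul_sub]; module
      rw [this, norm_smul, Real.norm_eq_abs, abs_of_pos ht0, ← hd, ht]
      rw [div_mul_eq_mul_div, mul_div_assoc, div_self hdpos.ne']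
      simp
    have hlbw := hlb _ hw
    have hzx : ‖z - x‖ = d := by rw [norm_sub_rev]
    rw [hzx] at hcomb
    -- f x ≥ f z + (f z - n) * (d/ρ) + γ/2 d² - (γρ/2) d
    have htd : t * d = ρ := by
      rw [ht, div_mul_eq_mul_div, mul_div_assoc, div_self hdpos.ne', mul_one]
    -- multiply everything by t and use t*d = ρ
    -- From hcomb, hlbw: 2 f z - n ≤ (1-t) f z + t f x - γ/2 t(1-t) d²
    -- ⇒ t f x ≥ f z - n + t f z + γ/2 t d² - γ/2 t² d²
    have h1 : t * f x ≥ (f z - n) + t * f z + γ/2 * (t*d) * d - γ/2 * (t*d) * (t*d) := by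
      nlinarith
    rw [htd] at h1
    -- f x ≥ (f z - n)/t + f z + γ/2 ρ d /t ... better substitute 1/t = d/ρ
    have h2 : f x ≥ (f z - n) * (d / ρ) + f z + γ/2 * ρ * d * (d/ρ) - γ/2 * ρ * ρ * (d/ρ) := by
      have hrd : t * ((f z - n) * (d / ρ)) = f z - n := by
        rw [ht]; field_simp
      have h3 : t * f x ≥ t * ((f z - n) * (d / ρ) + f z + γ/2 * ρ * d * (d/ρ) - γ/2 * ρ * ρ * (d/ρ)) := by
        have e1 : t * (γ/2 * ρ * d * (d/ρ)) = γ/2 * ρ * d := by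
          rw [ht]; field_simp
        have e2 : t * (γ/2 * ρ * ρ * (d/ρ)) = γ/2 * ρ * ρ := by
          rw [ht]; field_simp
        rw [mul_sub, mul_add, mul_add, hrd, e1, e2]
        linarith
      exact le_of_mul_le_mul_left h3 ht0
    have h4 : f x ≥ f z - C * d + γ/2 * d^2 := by
      have e3 : (f z - n) * (d / ρ) = -(((n:ℝ) - f z)/ρ) * d := by ring
      have e4 : γ/2 * ρ * d * (d/ρ) = γ/2 * d^2 := by field_simp
      have e5 : γ/2 * ρ * ρ * (d/ρ) = γ * ρ / 2 * d := by field_simp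
      rw [e3, e4, e5] at h2
      rw [hC]
      linarith
    have h5 : f z - C^2/(2*γ) ≤ f z - C * d + γ/2 * d^2 := by
      have : 0 ≤ γ/2 * (d - C/γ)^2 := by positivity
      have hexp : γ/2 * (d - C/γ)^2 = γ/2*d^2 - C*d + C^2/(2*γ) := by
        field_simp
        ring
      linarith
    exact le_trans (min_le_right _ _) (by linarith)

end ExistsMin
section ExistsMin2

open Filter Topology Metric

variable {E : Type*} [NormedAddCommGroup E] [InnerProductSpace ℝ E] [CompleteSpace E]

/-- A strongly convex lsc function on a Hilbert space attains its minimum. -/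
lemma sc_exists_min {γ : ℝ} {f : E → ℝ} (hf : IsStronglyConvex γ f)
    (hlsc : LowerSemicontinuous f) : ∃ x, ∀ z, f x ≤ f z := by
  have hγ := hf.1
  obtain ⟨m, hm⟩ := sc_bddBelow hf hlsc
  have hne : (Set.range f).Nonempty := ⟨f 0, 0, rfl⟩
  have hbdd : BddBelow (Set.range f) := ⟨m, by rintro _ ⟨x, rfl⟩; exact hm x⟩
  set s := sInf (Set.range f) with hs
  have hsle : ∀ z, s ≤ f z := fun z => csInf_le hbdd ⟨z, rfl⟩
  -- minimizing sequence
  have hseq : ∀ n : ℕ, ∃ x : E, f x < s + 1 / (n + 1) := by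
    intro n
    have : s < s + 1 / (n + 1) := by
      have : (0:ℝ) < 1 / (n+1) := by positivity
      linarith
    obtain ⟨a, ⟨x, rfl⟩, ha⟩ := exists_lt_of_csInf_lt hne this
    exact ⟨x, ha⟩
  choose u hu using hseq
  -- Cauchy
  have hkey : ∀ n m : ℕ, ‖u n - u m‖ ^ 2 ≤
      4 / γ * (1 / (n + 1) + 1 / (m + 1)) := by
    intro n m
    have hc := sc_combo hf (u n) (u m) (s := 1/2) (t := 1/2)
      (by norm_num) (by norm_num) (by norm_num)
    have hmid := hsle ((1/2 : ℝ) • u n + (1/2 : ℝ) • u m)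
    have h1 := hu n
    have h2 := hu m
    rw [div_mul_eq_mul_div, le_div_iff₀ hγ]
    nlinarith [hc, hmid, h1, h2]
  have hcauchy : CauchySeq u := by
    rw [Metric.cauchySeq_iff]
    intro ε hε
    obtain ⟨N, hN⟩ := exists_nat_ge (8 / (γ * ε ^ 2))
    refine ⟨N, fun a ha b hb => ?_⟩
    have h1 : (1:ℝ) / (a + 1) ≤ 1 / (N + 1) := by
      apply one_div_le_one_div_of_le (by positivity)
      have : (N:ℝ) ≤ a := Nat.cast_le.2 ha
      linarith
    have h2 : (1:ℝ) / (b + 1) ≤ 1 / (N + 1) := by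
      apply one_div_le_one_div_of_le (by positivity)
      have : (N:ℝ) ≤ b := Nat.cast_le.2 hb
      linarith
    have h3 := hkey a b
    have h4 : ‖u a - u b‖ ^ 2 ≤ 8 / γ * (1 / (N + 1)) := by
      have : 4 / γ * (1 / (a + 1) + 1 / (b + 1)) ≤ 8 / γ * (1 / (N + 1)) := by
        have h5 : (0:ℝ) ≤ 4 / γ := by positivity
        have h9 : 8 / γ * (1 / ((N:ℝ) + 1)) = 4 / γ * (1 / ((N:ℝ)+1) + 1 / ((N:ℝ)+1)) := by
          ring
        rw [h9]
        exact mul_le_mul_of_nonneg_left (add_le_add h1 h2) h5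
      linarith
    have h6 : 8 / γ * (1 / (N + 1)) < ε ^ 2 := by
      rw [mul_one_div, div_div, div_lt_iff₀ (by positivity)]
      have hN1 : 8 / (γ * ε ^ 2) < (N:ℝ) + 1 := by linarith
      rw [div_lt_iff₀ (by positivity)] at hN1
      nlinarith
    rw [dist_eq_norm]
    nlinarith [norm_nonneg (u a - u b), h4, h6, hε]
  obtain ⟨x, hx⟩ := cauchySeq_tendsto_of_complete hcauchy
  refine ⟨x, fun z => ?_⟩
  suffices hfx : f x ≤ s by exact le_trans hfx (hsle z)
  by_contra hcon
  push_neg at hcon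
  set δ := (f x - s) / 2 with hδ
  have hδpos : 0 < δ := by rw [hδ]; linarith
  have hev1 : ∀ᶠ n in atTop, s + δ < f (u n) :=
    hx.eventually (hlsc x (s + δ) (by rw [hδ]; linarith))
  have hev2 : ∀ᶠ n : ℕ in atTop, 1 / ((n:ℝ) + 1) ≤ δ := by
    obtain ⟨N, hN⟩ := exists_nat_ge (1 / δ)
    filter_upwards [eventually_ge_atTop N] with n hn
    rw [div_le_iff₀ (by positivity)]
    have h7 : (N:ℝ) ≤ n := Nat.cast_le.2 hn
    have h8 : 1 / δ ≤ (n:ℝ) := by linarith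
    rw [div_le_iff₀ hδpos] at h8
    nlinarith
  obtain ⟨n, hn1, hn2⟩ := (hev1.and hev2).exists
  have := hu n
  linarith

end ExistsMin2
section Helpers3

open Filter Topology

variable {E : Type*} [NormedAddCommGroup E] [InnerProductSpace ℝ E]

/-- sum of two lsc functions is lsc -/
lemma lsc_add {f g : E → ℝ} (hf : LowerSemicontinuous f) (hg : LowerSemicontinuous g) :
    LowerSemicontinuous fun x => f x + g x := by
  intro x y hy
  have hy' : y < f x + g x := hy
  set ε := (f x + g x - y) / 2 with hε
  have hεpos : 0 < ε := by simp only [hε]; linarith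
  have h1 : ∀ᶠ x' in 𝓝 x, f x - ε < f x' := hf x _ (by linarith)
  have h2 : ∀ᶠ x' in 𝓝 x, g x - ε < g x' := hg x _ (by linarith)
  filter_upwards [h1, h2] with x' hx1 hx2
  have : y = f x - ε + (g x - ε) := by simp only [hε]; ring
  rw [this]; exact add_lt_add hx1 hx2

lemma inner_continuous (b : E) : Continuous fun x : E => ⟪b, x⟫ :=
  continuous_const.inner continuous_id

lemma inner_convexOn (b : E) : ConvexOn ℝ Set.univ fun x : E => ⟪b, x⟫ := by
  refine ⟨convex_univ, fun x _ y _ s t hs ht hst => ?_⟩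
  simp only [inner_add_right, real_inner_smul_right, smul_eq_mul]
  exact le_of_eq rfl

/-- adding a linear functional preserves strong convexity -/
lemma sc_add_linear {γ : ℝ} {f : E → ℝ} (hf : IsStronglyConvex γ f) (b : E) :
    IsStronglyConvex γ fun x => f x + ⟪b, x⟫ := by
  refine ⟨hf.1, ?_⟩
  have heq : (fun x => (f x + ⟪b, x⟫) - γ / 2 * ‖x‖ ^ 2)
      = fun x => (f x - γ / 2 * ‖x‖ ^ 2) + ⟪b, x⟫ := by
    funext x; ring
  rw [heq]
  exact hf.2.add (inner_convexOn b)

/-- existence of the minimizer of a linearly perturbed strongly convex function,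
with the strong minimum inequality -/
lemma sc_exists_min_linear [CompleteSpace E] {γ : ℝ} {f : E → ℝ}
    (hf : IsStronglyConvex γ f) (hlsc : LowerSemicontinuous f) (b : E) :
    ∃ x, ∀ z, f x + ⟪b, x⟫ + γ / 2 * ‖z - x‖ ^ 2 ≤ f z + ⟪b, z⟫ := by
  have hsc := sc_add_linear hf b
  have hlsc' : LowerSemicontinuous fun x => f x + ⟪b, x⟫ :=
    lsc_add hlsc (inner_continuous b).lowerSemicontinuous
  obtain ⟨x, hx⟩ := sc_exists_min hsc hlsc'
  exact ⟨x, fun z => strong_min hsc hx z⟩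

end Helpers3
section Main

open Filter Topology

set_option maxHeartbeats 4000000 in
/-- Existence of a solution to the mismatched optimality inclusion
`0 ∈ ∂G(x̂) + V*ŷ`, `0 ∈ ∂F*(ŷ) − Ax̂`, i.e. of a fixed point of the primal-dual
Douglas–Rachford method with mismatched adjoint, under strong convexity with
`γ_G γ_{F*} > ‖A − V‖²/4`. -/
theorem pddr_mismatch_fixed_point_exists
    {X Y : Type*} [NormedAddCommGroup X] [InnerProductSpace ℝ X] [CompleteSpace X]
    [NormedAddCommGroup Y] [InnerProductSpace ℝ Y] [CompleteSpace Y]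
    (A V : X →L[ℝ] Y) (G : X → ℝ) (Fs : Y → ℝ) (γG γFs : ℝ)
    (hG : IsStronglyConvex γG G) (hFs : IsStronglyConvex γFs Fs)
    (hGlsc : LowerSemicontinuous G) (hFslsc : LowerSemicontinuous Fs)
    (hcond : (1 / 4) * ‖A - V‖ ^ 2 < γG * γFs) :
    ∃ (xh : X) (yh : Y) (g : X) (f : Y),
      IsSubgradientAt G g xh ∧ IsSubgradientAt Fs f yh ∧
      g + (ContinuousLinearMap.adjoint V) yh = 0 ∧ f = A xh := by
  classical
  have hγG := hG.1
  have hγFs := hFs.1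
  -- dual argmin family
  have hdual : ∀ w : Y, ∃ y, ∀ z : Y,
      Fs y + ⟪-w, y⟫ + γFs / 2 * ‖z - y‖ ^ 2 ≤ Fs z + ⟪-w, z⟫ :=
    fun w => sc_exists_min_linear hFs hFslsc (-w)
  choose yopt hyopt using hdual
  set Fss : Y → ℝ := fun w => ⟪w, yopt w⟫ - Fs (yopt w) with hFssdef
  have hFssA : ∀ (w y : Y), ⟪w, y⟫ - Fs y ≤ Fss w := by
    intro w y
    have h := hyopt w y
    simp only [inner_neg_left] at h
    have hq : 0 ≤ γFs / 2 * ‖y - yopt w‖ ^ 2 := by positivity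
    simp only [hFssdef]
    linarith
  -- Lipschitz continuity of the dual argmin map
  have hyLip : ∀ w1 w2 : Y, ‖yopt w1 - yopt w2‖ ≤ 1 / γFs * ‖w1 - w2‖ := by
    intro w1 w2
    have h1 := hyopt w1 (yopt w2)
    have h2 := hyopt w2 (yopt w1)
    simp only [inner_neg_left] at h1 h2
    have e2 : ‖yopt w1 - yopt w2‖ ^ 2 = ‖yopt w2 - yopt w1‖ ^ 2 := by rw [norm_sub_rev]
    rw [← e2] at h1
    have hip : ⟪w1, yopt w1⟫ - ⟪w1, yopt w2⟫ + ⟪w2, yopt w2⟫ - ⟪w2, yopt w1⟫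
        = ⟪w1 - w2, yopt w1 - yopt w2⟫ := by
      simp only [inner_sub_left, inner_sub_right]; ring
    have hCS := real_inner_le_norm (w1 - w2) (yopt w1 - yopt w2)
    have hm : γFs * ‖yopt w1 - yopt w2‖ ^ 2 ≤ ‖w1 - w2‖ * ‖yopt w1 - yopt w2‖ := by
      nlinarith [h1, h2, hip, hCS]
    rcases eq_or_lt_of_le (norm_nonneg (yopt w1 - yopt w2)) with h | h
    · rw [← h]; positivity
    · by_contra hcon
      push_neg at hcon
      rw [div_mul_eq_mul_div, one_mul, div_lt_iff₀ hγFs] at hcon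
      nlinarith [hm, h, hcon]
  -- the saddle-point solver for the matched problem with linear perturbation b
  have hsaddle : ∀ b : X, ∃ (x : X) (y : Y),
      (∀ z, G x + ⟪b, x⟫ + ⟪A x, y⟫ + γG / 2 * ‖z - x‖ ^ 2
        ≤ G z + ⟪b, z⟫ + ⟪A z, y⟫) ∧
      (∀ z, Fs y - ⟪A x, y⟫ + γFs / 2 * ‖z - y‖ ^ 2 ≤ Fs z - ⟪A x, z⟫) := by
    intro b
    set Φ : X → ℝ := fun x => G x + ⟪b, x⟫ + Fss (A x) with hΦdef
    have hconv : ConvexOn ℝ Set.univ fun x => Fss (A x) := by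
      refine ⟨convex_univ, fun x1 _ x2 _ s t hs ht hst => ?_⟩
      set y0 := yopt (A (s • x1 + t • x2)) with hy0
      have he : Fss (A (s • x1 + t • x2)) = ⟪A (s • x1 + t • x2), y0⟫ - Fs y0 := rfl
      have h1 : ⟪A x1, y0⟫ - Fs y0 ≤ Fss (A x1) := hFssA _ _
      have h2 : ⟪A x2, y0⟫ - Fs y0 ≤ Fss (A x2) := hFssA _ _
      have hFs0 : s * Fs y0 + t * Fs y0 = Fs y0 := by rw [← add_mul, hst, one_mul]
      simp only [smul_eq_mul]
      rw [he]
      simp only [map_add, map_smul, inner_add_left, real_inner_smul_left]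
      nlinarith [mul_le_mul_of_nonneg_left h1 hs, mul_le_mul_of_nonneg_left h2 ht, hFs0]
    have hlscA : LowerSemicontinuous fun x => Fss (A x) := by
      intro x0 c hc
      have he : Fss (A x0) = ⟪A x0, yopt (A x0)⟫ - Fs (yopt (A x0)) := rfl
      have hcont : Continuous fun x : X => ⟪A x, yopt (A x0)⟫ - Fs (yopt (A x0)) :=
        (A.continuous.inner continuous_const).sub continuous_const
      have hev := (hcont.tendsto x0).eventually
        (eventually_gt_nhds (show c < ⟪A x0, yopt (A x0)⟫ - Fs (yopt (A x0)) from he ▸ hc))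
      filter_upwards [hev] with x' hx'
      exact lt_of_lt_of_le hx' (hFssA _ _)
    have hscΦ : IsStronglyConvex γG Φ := by
      refine ⟨hγG, ?_⟩
      have heq : (fun x => Φ x - γG / 2 * ‖x‖ ^ 2)
          = fun x => ((G x - γG / 2 * ‖x‖ ^ 2) + ⟪b, x⟫) + Fss (A x) := by
        funext x; simp only [hΦdef]; ring
      rw [heq]
      exact (hG.2.add (inner_convexOn b)).add hconv
    have hlscΦ : LowerSemicontinuous Φ :=
      lsc_add (lsc_add hGlsc (inner_continuous b).lowerSemicontinuous) hlscA
    obtain ⟨x, hx⟩ := sc_exists_min hscΦ hlscΦ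
    -- plain first-order condition in x, via a directional argument
    have hplain : ∀ z, G x + ⟪b, x⟫ + ⟪A x, yopt (A x)⟫
        ≤ G z + ⟪b, z⟫ + ⟪A z, yopt (A x)⟫ := by
      intro z
      have hstep : ∀ t : ℝ, 0 < t → t ≤ 1 →
          G x + ⟪b, x⟫ ≤ G z + ⟪b, z⟫ + ⟪A (z - x), yopt (A x)⟫
            + t * (‖A (z - x)‖ ^ 2 / γFs) := by
        intro t ht0 ht1
        set xt : X := (1 - t) • x + t • z with hxtdef
        have hmin : G x + ⟪b, x⟫ + Fss (A x) ≤ G xt + ⟪b, xt⟫ + Fss (A xt) := hx xt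
        have hG' : G xt ≤ (1 - t) * G x + t * G z := by
          have := sc_combo hG x z (s := 1 - t) (t := t) (by linarith) ht0.le (by ring)
          rw [← hxtdef] at this
          have h1t : (0:ℝ) ≤ 1 - t := by linarith
          have hnn : 0 ≤ γG / 2 * ((1 - t) * t) * ‖x - z‖ ^ 2 :=
            mul_nonneg (mul_nonneg (by positivity) (mul_nonneg h1t ht0.le)) (sq_nonneg _)
          linarith
        have hbt : ⟪b, xt⟫ = (1 - t) * ⟪b, x⟫ + t * ⟪b, z⟫ := by
          rw [hxtdef]
          simp [inner_add_right, real_inner_smul_right]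
        have hAd : A xt - A x = t • A (z - x) := by
          rw [← map_smul, ← map_sub]
          congr 1
          rw [hxtdef]
          module
        have hH1 : Fss (A xt) = ⟪A xt, yopt (A xt)⟫ - Fs (yopt (A xt)) := rfl
        have hH2 : ⟪A x, yopt (A xt)⟫ - Fs (yopt (A xt)) ≤ Fss (A x) := hFssA _ _
        have hdiff : ⟪A xt, yopt (A xt)⟫ - ⟪A x, yopt (A xt)⟫
            = t * ⟪A (z - x), yopt (A xt)⟫ := by
          rw [← inner_sub_left, hAd, real_inner_smul_left]
        -- bound the inner product against yopt (A x)
        have h5 : ‖yopt (A xt) - yopt (A x)‖ ≤ 1 / γFs * ‖A xt - A x‖ := hyLip _ _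
        have hAn : ‖A xt - A x‖ = t * ‖A (z - x)‖ := by
          rw [hAd, norm_smul, Real.norm_eq_abs, abs_of_pos ht0]
        have h6 := real_inner_le_norm (A (z - x)) (yopt (A xt) - yopt (A x))
        have h7 : ‖A (z - x)‖ * ‖yopt (A xt) - yopt (A x)‖
            ≤ ‖A (z - x)‖ * (1 / γFs * (t * ‖A (z - x)‖)) := by
          apply mul_le_mul_of_nonneg_left _ (norm_nonneg _)
          rw [← hAn]; exact h5
        have h8 : ⟪A (z - x), yopt (A xt)⟫
            = ⟪A (z - x), yopt (A x)⟫ + ⟪A (z - x), yopt (A xt) - yopt (A x)⟫ := by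
          rw [← inner_add_right]; congr 1; abel
        have h9 : ‖A (z - x)‖ * (1 / γFs * (t * ‖A (z - x)‖))
            = t * (‖A (z - x)‖ ^ 2 / γFs) := by ring
        have h10 : ⟪A (z - x), yopt (A xt)⟫
            ≤ ⟪A (z - x), yopt (A x)⟫ + t * (‖A (z - x)‖ ^ 2 / γFs) := by
          rw [h8, ← h9]; linarith
        -- assemble and divide by t
        have hdiv : t * (G x + ⟪b, x⟫)
            ≤ t * (G z + ⟪b, z⟫ + ⟪A (z - x), yopt (A x)⟫
              + t * (‖A (z - x)‖ ^ 2 / γFs)) := by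
          have hq : 0 ≤ t * (t * (‖A (z - x)‖ ^ 2 / γFs)) := by positivity
          nlinarith [hmin, hG', hbt, hH1, hH2, hdiff, h10, ht0,
            mul_le_mul_of_nonneg_left h10 ht0.le]
        have := le_of_mul_le_mul_left hdiv ht0
        -- absorb t * t ≤ t
        have ht2 : t * (‖A (z - x)‖ ^ 2 / γFs) ≤ 1 * (‖A (z - x)‖ ^ 2 / γFs) := by
          apply mul_le_mul_of_nonneg_right ht1 (by positivity)
        linarith
      -- take the limit t → 0
      have h0 : Tendsto (fun n : ℕ => (1:ℝ) / (n + 1)) atTop (𝓝 0) :=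
        tendsto_one_div_add_atTop_nhds_zero_nat
      have hc : Continuous (fun u : ℝ => G z + ⟪b, z⟫ + ⟪A (z - x), yopt (A x)⟫
          + u * (‖A (z - x)‖ ^ 2 / γFs)) := by continuity
      have hlim : Tendsto (fun n : ℕ => G z + ⟪b, z⟫ + ⟪A (z - x), yopt (A x)⟫
          + 1 / ((n:ℝ) + 1) * (‖A (z - x)‖ ^ 2 / γFs)) atTop
          (𝓝 (G z + ⟪b, z⟫ + ⟪A (z - x), yopt (A x)⟫
            + 0 * (‖A (z - x)‖ ^ 2 / γFs))) := (hc.tendsto 0).comp h0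
      have hle : G x + ⟪b, x⟫ ≤ G z + ⟪b, z⟫ + ⟪A (z - x), yopt (A x)⟫
          + 0 * (‖A (z - x)‖ ^ 2 / γFs) := by
        refine ge_of_tendsto' hlim fun n => ?_
        refine hstep _ (by positivity) ?_
        rw [div_le_one (by positivity)]
        linarith [Nat.cast_nonneg (α := ℝ) n]
      have hsplit : ⟪A (z - x), yopt (A x)⟫ = ⟪A z, yopt (A x)⟫ - ⟪A x, yopt (A x)⟫ := by
        rw [map_sub, inner_sub_left]
      rw [hsplit] at hle
      linarith
    -- upgrade to the strong first-order condition
    have hstrong : ∀ z, G x + ⟪b, x⟫ + ⟪A x, yopt (A x)⟫ + γG / 2 * ‖z - x‖ ^ 2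
        ≤ G z + ⟪b, z⟫ + ⟪A z, yopt (A x)⟫ := by
      set c : X := b + (ContinuousLinearMap.adjoint A) (yopt (A x)) with hcdef
      have hcin : ∀ w : X, ⟪c, w⟫ = ⟪b, w⟫ + ⟪A w, yopt (A x)⟫ := by
        intro w
        rw [hcdef, inner_add_left, ContinuousLinearMap.adjoint_inner_left]
        simp [real_inner_comm]
      have hsc' := sc_add_linear hG c
      have hmin' : ∀ z, G x + ⟪c, x⟫ ≤ G z + ⟪c, z⟫ := by
        intro z
        rw [hcin x, hcin z]
        linarith [hplain z]
      intro z
      have := strong_min hsc' (f := fun w => G w + ⟪c, w⟫) hmin' z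
      simp only [hcin x, hcin z] at this
      linarith
    exact ⟨x, yopt (A x), hstrong, fun z => by
      have h := hyopt (A x) z
      simp only [inner_neg_left] at h
      linarith⟩
  choose sx sy hs1 hs2 using hsaddle
  -- the contraction estimate
  set σ := Real.sqrt (γG * γFs) with hσdef
  have hσpos : 0 < σ := Real.sqrt_pos.2 (mul_pos hγG hγFs)
  have hσ2 : σ ^ 2 = γG * γFs := Real.sq_sqrt (mul_pos hγG hγFs).le
  have hkey : ∀ b1 b2 : X, ‖sy b1 - sy b2‖ ≤ 1 / (2 * σ) * ‖b1 - b2‖ := by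
    intro b1 b2
    have h11 := hs1 b1 (sx b2)
    have h12 := hs1 b2 (sx b1)
    have h21 := hs2 b1 (sy b2)
    have h22 := hs2 b2 (sy b1)
    have e1 : ‖sx b1 - sx b2‖ ^ 2 = ‖sx b2 - sx b1‖ ^ 2 := by rw [norm_sub_rev]
    have e2 : ‖sy b1 - sy b2‖ ^ 2 = ‖sy b2 - sy b1‖ ^ 2 := by rw [norm_sub_rev]
    rw [← e1] at h11
    rw [← e2] at h21
    have hip : ⟪b1, sx b2⟫ + ⟪b2, sx b1⟫ - ⟪b1, sx b1⟫ - ⟪b2, sx b2⟫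
        = ⟪b2 - b1, sx b1 - sx b2⟫ := by
      simp only [inner_sub_left, inner_sub_right]; ring
    have hCS : ⟪b2 - b1, sx b1 - sx b2⟫ ≤ ‖b2 - b1‖ * ‖sx b1 - sx b2‖ :=
      real_inner_le_norm _ _
    have hnb : ‖b2 - b1‖ = ‖b1 - b2‖ := norm_sub_rev _ _
    rw [hnb] at hCS
    have hmain : γG * ‖sx b1 - sx b2‖ ^ 2 + γFs * ‖sy b1 - sy b2‖ ^ 2
        ≤ ‖b1 - b2‖ * ‖sx b1 - sx b2‖ := by
      nlinarith [h11, h12, h21, h22, hip, hCS]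
    by_contra hcon
    push_neg at hcon
    have hy0 : 0 ≤ ‖sy b1 - sy b2‖ := norm_nonneg _
    have hb0 : 0 ≤ ‖b1 - b2‖ := norm_nonneg _
    have hx0 : 0 ≤ ‖sx b1 - sx b2‖ := norm_nonneg _
    have hq : 4 * γG * (‖b1 - b2‖ * ‖sx b1 - sx b2‖)
        ≤ 4 * γG * (γG * ‖sx b1 - sx b2‖ ^ 2) + ‖b1 - b2‖ ^ 2 := by
      nlinarith [sq_nonneg (‖b1 - b2‖ - 2 * γG * ‖sx b1 - sx b2‖)]
    have hyq : 4 * γG * (γFs * ‖sy b1 - sy b2‖ ^ 2) ≤ ‖b1 - b2‖ ^ 2 := by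
      have h4 := mul_le_mul_of_nonneg_left hmain (by positivity : (0:ℝ) ≤ 4 * γG)
      rw [mul_add] at h4
      linarith
    have h2σ : 0 < 2 * σ := by linarith
    have hlt : ‖b1 - b2‖ < 2 * σ * ‖sy b1 - sy b2‖ := by
      rw [div_mul_eq_mul_div, one_mul, div_lt_iff₀ h2σ] at hcon
      nlinarith [hcon]
    have hsq : ‖b1 - b2‖ ^ 2 < 4 * (γG * γFs) * ‖sy b1 - sy b2‖ ^ 2 := by
      have hr : (2 * σ * ‖sy b1 - sy b2‖) ^ 2 = 4 * (γG * γFs) * ‖sy b1 - sy b2‖ ^ 2 := by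
        rw [mul_pow, mul_pow, hσ2]; ring
      nlinarith [hlt, hb0]
    nlinarith [hyq, hsq]
  -- the contraction map
  set B : X →L[ℝ] Y := V - A with hBdef
  set T : Y → Y := fun v => sy ((ContinuousLinearMap.adjoint B) v) with hTdef
  have hBA : ‖B‖ = ‖A - V‖ := by rw [hBdef, norm_sub_rev]
  set κ : ℝ := ‖A - V‖ / (2 * σ) with hκdef
  have hκ0 : 0 ≤ κ := by positivity
  have hκ1 : κ < 1 := by
    rw [hκdef, div_lt_one (by linarith)]
    by_contra hcon
    push_neg at hcon
    have h1 : (2 * σ) ^ 2 ≤ ‖A - V‖ ^ 2 := by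
      nlinarith [hσpos, norm_nonneg (A - V)]
    rw [mul_pow, hσ2] at h1
    nlinarith [hcond]
  have hadj : ‖ContinuousLinearMap.adjoint B‖ = ‖B‖ :=
    ContinuousLinearMap.adjoint.norm_map B
  have hlipT : ∀ v1 v2 : Y, ‖T v1 - T v2‖ ≤ κ * ‖v1 - v2‖ := by
    intro v1 v2
    have h1 := hkey ((ContinuousLinearMap.adjoint B) v1) ((ContinuousLinearMap.adjoint B) v2)
    have h2 : ‖(ContinuousLinearMap.adjoint B) v1 - (ContinuousLinearMap.adjoint B) v2‖
        ≤ ‖A - V‖ * ‖v1 - v2‖ := by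
      rw [← map_sub]
      calc ‖(ContinuousLinearMap.adjoint B) (v1 - v2)‖
          ≤ ‖ContinuousLinearMap.adjoint B‖ * ‖v1 - v2‖ :=
            (ContinuousLinearMap.adjoint B).le_opNorm _
        _ = ‖A - V‖ * ‖v1 - v2‖ := by rw [hadj, hBA]
    calc ‖T v1 - T v2‖
        ≤ 1 / (2 * σ) * ‖(ContinuousLinearMap.adjoint B) v1
            - (ContinuousLinearMap.adjoint B) v2‖ := h1
      _ ≤ 1 / (2 * σ) * (‖A - V‖ * ‖v1 - v2‖) :=
          mul_le_mul_of_nonneg_left h2 (by positivity)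
      _ = κ * ‖v1 - v2‖ := by rw [hκdef]; ring
  have hT : ContractingWith (Real.toNNReal κ) T := by
    constructor
    · rw [← NNReal.coe_lt_coe, Real.coe_toNNReal _ hκ0, NNReal.coe_one]
      exact hκ1
    · refine LipschitzWith.of_dist_le_mul fun v1 v2 => ?_
      rw [dist_eq_norm, dist_eq_norm, Real.coe_toNNReal _ hκ0]
      exact hlipT v1 v2
  obtain ⟨v, hv, -, -⟩ := hT.exists_fixedPoint 0 (edist_ne_top _ _)
  have hfix : sy ((ContinuousLinearMap.adjoint B) v) = v := hv
  clear_value T κ σ Fss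
  clear hT hlipT hv hκ1 hκ0 hkey hσpos hσ2 hadj
  refine ⟨sx ((ContinuousLinearMap.adjoint B) v), v,
    -((ContinuousLinearMap.adjoint A) v + (ContinuousLinearMap.adjoint B) v),
    A (sx ((ContinuousLinearMap.adjoint B) v)), ?_, ?_, ?_, rfl⟩
  · intro z
    have h := hs1 ((ContinuousLinearMap.adjoint B) v) z
    rw [hfix] at h
    have hnn : 0 ≤ γG / 2 * ‖z - sx ((ContinuousLinearMap.adjoint B) v)‖ ^ 2 := by positivity
    have hc : ∀ w : X, ⟪(ContinuousLinearMap.adjoint A) v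
        + (ContinuousLinearMap.adjoint B) v, w⟫
        = ⟪A w, v⟫ + ⟪(ContinuousLinearMap.adjoint B) v, w⟫ := by
      intro w
      rw [inner_add_left, ContinuousLinearMap.adjoint_inner_left, real_inner_comm v (A w)]
    have hin : ⟪-((ContinuousLinearMap.adjoint A) v + (ContinuousLinearMap.adjoint B) v),
        z - sx ((ContinuousLinearMap.adjoint B) v)⟫
        = (⟪A (sx ((ContinuousLinearMap.adjoint B) v)), v⟫
            + ⟪(ContinuousLinearMap.adjoint B) v, sx ((ContinuousLinearMap.adjoint B) v)⟫)
          - (⟪A z, v⟫ + ⟪(ContinuousLinearMap.adjoint B) v, z⟫) := by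
      rw [inner_neg_left, inner_sub_right, hc z, hc (sx ((ContinuousLinearMap.adjoint B) v))]
      ring
    linarith
  · intro z
    have h := hs2 ((ContinuousLinearMap.adjoint B) v) z
    rw [hfix] at h
    have hnn : 0 ≤ γFs / 2 * ‖z - v‖ ^ 2 := by positivity
    rw [inner_sub_right]
    linarith
  · rw [hBdef, map_sub]
    simp only [ContinuousLinearMap.sub_apply]
    abel

end Main
end

section
/- Let X and Y be real Hilbert spaces, A, V : X → Y bounded linear operators, G : X → ℝ a γ_G-strongly convex function and F* : Y → ℝ a γ_{F*}-strongly convex function, with γ_G · γ_{F*} > (1/4)·‖A − V‖². Suppose for i = 1, 2 there are x_i ∈ X, y_i ∈ Y, g_i ∈ X, f_i ∈ Y such that g_i is a subgradient of G at x_i, f_i is a subgradient of F* at y_i, g_i + V*(y_i) = 0, and f_i = A(x_i). Then x₁ = x₂ and y₁ = y₂. -/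
open scoped RealInnerProductSpace

lemma strong_subgradient_ineq {E : Type*} [NormedAddCommGroup E] [InnerProductSpace ℝ E]
    {γ : ℝ} {f : E → ℝ} (hf : IsStronglyConvex γ f) {g x : E}
    (hg : IsSubgradientAt f g x) (z : E) :
    f x + ⟪g, z - x⟫ + γ / 2 * ‖z - x‖ ^ 2 ≤ f z := by
  obtain ⟨hγ, hconv⟩ := hf
  set P := ⟪g, z - x⟫ with hP
  set C := ‖z - x‖ ^ 2 with hC
  have hC0 : 0 ≤ C := by positivity
  have hnz : ‖z‖ ^ 2 = ‖x‖ ^ 2 + 2 * ⟪x, z - x⟫ + C := by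
    have h := norm_add_sq_real x (z - x)
    rw [show x + (z - x) = z from by abel] at h
    rw [hC]; exact h
  have key : ∀ t : ℝ, t ∈ Set.Ioc (0:ℝ) 1 → P + γ / 2 * (1 - t) * C ≤ f z - f x := by
    intro t ht
    have ht0 := ht.1
    have ht1 := ht.2
    have hmem : (1 - t) • x + t • z = x + t • (z - x) := by
      rw [smul_sub]; module
    have hcv := hconv.2 (Set.mem_univ x) (Set.mem_univ z)
      (by linarith : (0:ℝ) ≤ 1 - t) (le_of_lt ht0) (by ring)
    rw [hmem] at hcv
    have hsub := hg (x + t • (z - x))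
    have h1 : ⟪g, x + t • (z - x) - x⟫ = t * P := by
      rw [hP]; simp [real_inner_smul_right]
    have h2 : ‖x + t • (z - x)‖ ^ 2 = ‖x‖ ^ 2 + 2 * t * ⟪x, z - x⟫ + t ^ 2 * C := by
      rw [norm_add_sq_real, real_inner_smul_right, norm_smul, hC]
      simp [mul_pow]
      ring
    rw [h1] at hsub
    have hmul : t * (P + γ / 2 * (1 - t) * C) ≤ t * (f z - f x) := by
      simp only [smul_eq_mul] at hcv
      rw [h2, hnz] at hcv
      nlinarith [hsub, hcv]
    exact le_of_mul_le_mul_left hmul ht0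
  -- pass to the limit t → 0 (elementary argument)
  have hP_le : P ≤ f z - f x := by
    have := key 1 ⟨one_pos, le_refl 1⟩
    linarith
  set c := γ / 2 * C with hc
  have hc0 : 0 ≤ c := by positivity
  by_contra hcon
  push_neg at hcon
  have hd : 0 < P + c - (f z - f x) := by linarith
  set d := P + c - (f z - f x) with hdd
  have hdc : d ≤ c := by linarith
  have hcpos : 0 < c := lt_of_lt_of_le hd hdc
  have htmem : d / (2 * c) ∈ Set.Ioc (0:ℝ) 1 := by
    constructor
    · positivity
    · rw [div_le_one (by positivity)]; linarith
  have hcne : c ≠ 0 := ne_of_gt hcpos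
  have hkey := key (d / (2 * c)) htmem
  have hct : c * (d / (2 * c)) = d / 2 := by
    field_simp
  have heq : γ / 2 * (1 - d / (2 * c)) * C = c - c * (d / (2 * c)) := by
    rw [hc]; ring
  rw [heq, hct] at hkey
  linarith

lemma strong_mono {E : Type*} [NormedAddCommGroup E] [InnerProductSpace ℝ E]
    {γ : ℝ} {f : E → ℝ} (hf : IsStronglyConvex γ f) {g₁ g₂ x₁ x₂ : E}
    (h1 : IsSubgradientAt f g₁ x₁) (h2 : IsSubgradientAt f g₂ x₂) :
    γ * ‖x₁ - x₂‖ ^ 2 ≤ ⟪g₁ - g₂, x₁ - x₂⟫ := by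
  have a1 := strong_subgradient_ineq hf h1 x₂
  have a2 := strong_subgradient_ineq hf h2 x₁
  have hn : ‖x₂ - x₁‖ = ‖x₁ - x₂‖ := norm_sub_rev _ _
  have hg1 : ⟪g₁, x₂ - x₁⟫ = -⟪g₁, x₁ - x₂⟫ := by
    rw [← inner_neg_right]; congr 1; abel
  rw [hn, hg1] at a1
  rw [inner_sub_left]
  linarith


set_option maxHeartbeats 1000000 in
/-- Uniqueness of solutions of the mismatched optimality inclusion
`0 ∈ ∂G(x̂) + V*ŷ`, `0 ∈ ∂F*(ŷ) − Ax̂` under strong convexity with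
`γ_G γ_{F*} > ‖A − V‖²/4`. -/
theorem pddr_mismatch_fixed_point_unique
    {X Y : Type*} [NormedAddCommGroup X] [InnerProductSpace ℝ X] [CompleteSpace X]
    [NormedAddCommGroup Y] [InnerProductSpace ℝ Y] [CompleteSpace Y]
    (A V : X →L[ℝ] Y) (G : X → ℝ) (Fs : Y → ℝ) (γG γFs : ℝ)
    (hG : IsStronglyConvex γG G) (hFs : IsStronglyConvex γFs Fs)
    (hcond : (1 / 4) * ‖A - V‖ ^ 2 < γG * γFs)
    (x₁ x₂ g₁ g₂ : X) (y₁ y₂ : Y) (f₁ f₂ : Y)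
    (hg₁ : IsSubgradientAt G g₁ x₁) (hg₂ : IsSubgradientAt G g₂ x₂)
    (hf₁ : IsSubgradientAt Fs f₁ y₁) (hf₂ : IsSubgradientAt Fs f₂ y₂)
    (he₁ : g₁ + (ContinuousLinearMap.adjoint V) y₁ = 0)
    (he₂ : g₂ + (ContinuousLinearMap.adjoint V) y₂ = 0)
    (hh₁ : f₁ = A x₁) (hh₂ : f₂ = A x₂) :
    x₁ = x₂ ∧ y₁ = y₂ := by
  set u := x₁ - x₂ with hu
  set v := y₁ - y₂ with hv
  set a := ‖u‖ with ha'
  set b := ‖v‖ with hb'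
  set N := ‖A - V‖ with hN'
  have ha : 0 ≤ a := norm_nonneg _
  have hb : 0 ≤ b := norm_nonneg _
  have hN : 0 ≤ N := norm_nonneg _
  have hγG := hG.1
  have hγFs := hFs.1
  have m1 : γG * a ^ 2 ≤ ⟪g₁ - g₂, u⟫ := strong_mono hG hg₁ hg₂
  have m2 : γFs * b ^ 2 ≤ ⟪f₁ - f₂, v⟫ := strong_mono hFs hf₁ hf₂
  -- rewrite the inner products
  have hg1 : g₁ = -(ContinuousLinearMap.adjoint V) y₁ :=
    eq_neg_of_add_eq_zero_left he₁
  have hg2 : g₂ = -(ContinuousLinearMap.adjoint V) y₂ :=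
    eq_neg_of_add_eq_zero_left he₂
  have e1 : ⟪g₁ - g₂, u⟫ = -⟪v, V u⟫ := by
    rw [hg1, hg2]
    have : -(ContinuousLinearMap.adjoint V) y₁ - -(ContinuousLinearMap.adjoint V) y₂
        = (ContinuousLinearMap.adjoint V) (-(y₁ - y₂)) := by
      rw [map_neg, map_sub]; abel
    rw [this, ContinuousLinearMap.adjoint_inner_left, inner_neg_left, hv]
  have e2 : ⟪f₁ - f₂, v⟫ = ⟪A u, v⟫ := by
    rw [hh₁, hh₂, ← map_sub, hu]
  rw [e1] at m1
  rw [e2] at m2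
  have hsum : γG * a ^ 2 + γFs * b ^ 2 ≤ ⟪(A - V) u, v⟫ := by
    have : ⟪(A - V) u, v⟫ = ⟪A u, v⟫ - ⟪v, V u⟫ := by
      rw [ContinuousLinearMap.sub_apply, inner_sub_left, real_inner_comm v (V u)]
    rw [this]
    linarith
  have hbound : ⟪(A - V) u, v⟫ ≤ N * a * b := by
    calc ⟪(A - V) u, v⟫ ≤ ‖(A - V) u‖ * ‖v‖ := real_inner_le_norm _ _
    _ ≤ (N * a) * b := by
        apply mul_le_mul_of_nonneg_right _ hb
        exact (A - V).le_opNorm u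
    _ = N * a * b := by ring
  have key : γG * a ^ 2 + γFs * b ^ 2 ≤ N * a * b := le_trans hsum hbound
  have hS : γG * a ^ 2 + γFs * b ^ 2 ≤ 0 := by
    by_contra hS
    push_neg at hS
    have habpos : 0 < a * b := by
      by_contra hab
      push_neg at hab
      nlinarith [mul_nonneg ha hb]
    have h2 : (γG * a ^ 2 + γFs * b ^ 2) ^ 2 ≤ (N * a * b) ^ 2 :=
      pow_le_pow_left₀ hS.le key 2
    have h4 : (N * a * b) ^ 2 < 4 * (γG * γFs) * (a * b) ^ 2 := by
      have hN2 : N ^ 2 < 4 * (γG * γFs) := by linarith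
      calc (N * a * b) ^ 2 = N ^ 2 * (a * b) ^ 2 := by ring
      _ < 4 * (γG * γFs) * (a * b) ^ 2 :=
          mul_lt_mul_of_pos_right hN2 (pow_pos habpos 2)
    have h5 : 4 * (γG * γFs) * (a * b) ^ 2 ≤ (γG * a ^ 2 + γFs * b ^ 2) ^ 2 := by
      nlinarith [sq_nonneg (γG * a ^ 2 - γFs * b ^ 2)]
    linarith
  have ha0 : a = 0 := by
    have : a ^ 2 ≤ 0 := by nlinarith [sq_nonneg a, sq_nonneg b]
    nlinarith [sq_nonneg a]
  have hb0 : b = 0 := by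
    have : b ^ 2 ≤ 0 := by nlinarith [sq_nonneg a, sq_nonneg b]
    nlinarith [sq_nonneg b]
  constructor
  · have : u = 0 := norm_eq_zero.mp ha0
    rw [hu, sub_eq_zero] at this; exact this
  · have : v = 0 := norm_eq_zero.mp hb0
    rw [hv, sub_eq_zero] at this; exact this
end

section
/- Let X and Y be real Hilbert spaces, A, V : X → Y bounded linear operators, G : X → ℝ a γ_G-strongly convex function and F* : Y → ℝ a γ_{F*}-strongly convex function, with γ_G · γ_{F*} > (1/4)·‖A − V‖². Then there exists μ > 0 such that for all x, x' ∈ X, y, y' ∈ Y, all subgradients g of G at x and g' of G at x', and all subgradients f of F* at y and f' of F* at y', one has ⟪(g + V*(y)) − (g' + V*(y')), x − x'⟫ + ⟪(f − A(x)) − (f' − A(x')), y − y'⟫ ≥ μ·(‖x − x'‖² + ‖y − y'‖²). -/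
open scoped RealInnerProductSpace

lemma strong_subgrad {E : Type*} [NormedAddCommGroup E] [InnerProductSpace ℝ E]
    {γ : ℝ} {G : E → ℝ} (hG : IsStronglyConvex γ G) {g x : E}
    (hg : IsSubgradientAt G g x) (z : E) :
    G x + ⟪g, z - x⟫ + γ / 2 * ‖z - x‖ ^ 2 ≤ G z := by
  obtain ⟨hγ, hconv⟩ := hG
  have key : ∀ t : ℝ, 0 < t → t ≤ 1 →
      ⟪g, z - x⟫ + γ / 2 * (1 - t) * ‖z - x‖ ^ 2 ≤ G z - G x := by
    intro t ht ht1
    have hsub := hg ((1 - t) • x + t • z)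
    have hcv := hconv.2 (Set.mem_univ x) (Set.mem_univ z)
      (by linarith : (0:ℝ) ≤ 1 - t) (le_of_lt ht) (by ring)
    simp only at hcv
    have hinner : ⟪g, ((1 - t) • x + t • z) - x⟫ = t * ⟪g, z - x⟫ := by
      have : ((1 - t) • x + t • z) - x = t • (z - x) := by
        module
      rw [this, real_inner_smul_right]
    have hnorm : ‖(1 - t) • x + t • z‖ ^ 2
        = (1 - t) * ‖x‖ ^ 2 + t * ‖z‖ ^ 2 - t * (1 - t) * ‖z - x‖ ^ 2 := by
      have e1 : ‖(1 - t) • x + t • z‖ ^ 2 = ⟪(1 - t) • x + t • z, (1 - t) • x + t • z⟫ :=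
        (real_inner_self_eq_norm_sq _).symm
      have e2 : ‖z - x‖ ^ 2 = ⟪z - x, z - x⟫ := (real_inner_self_eq_norm_sq _).symm
      have e3 : ‖x‖ ^ 2 = ⟪x, x⟫ := (real_inner_self_eq_norm_sq _).symm
      have e4 : ‖z‖ ^ 2 = ⟪z, z⟫ := (real_inner_self_eq_norm_sq _).symm
      rw [e1, e2, e3, e4]
      simp only [inner_add_add_self, inner_sub_sub_self, real_inner_smul_left,
        real_inner_smul_right, real_inner_comm x z]
      ring
    rw [hinner] at hsub
    rw [hnorm] at hcv
    simp only [smul_eq_mul] at hcv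
    have hmul : t * (⟪g, z - x⟫ + γ / 2 * (1 - t) * ‖z - x‖ ^ 2) ≤ t * (G z - G x) := by
      nlinarith [hsub, hcv]
    exact (mul_le_mul_iff_right₀ ht).mp hmul
  have main : ⟪g, z - x⟫ + γ / 2 * ‖z - x‖ ^ 2 ≤ G z - G x + 0 := by
    rw [add_zero]
    refine le_of_forall_pos_le_add ?_
    intro ε hε
    set t : ℝ := min 1 (ε / (γ / 2 * (‖z - x‖ ^ 2 + 1))) with htdef
    have hden : 0 < γ / 2 * (‖z - x‖ ^ 2 + 1) := by positivity
    have ht : 0 < t := lt_min one_pos (div_pos hε hden)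
    have ht1 : t ≤ 1 := min_le_left _ _
    have hk := key t ht ht1
    have htle : t ≤ ε / (γ / 2 * (‖z - x‖ ^ 2 + 1)) := min_le_right _ _
    have hbound : γ / 2 * t * ‖z - x‖ ^ 2 ≤ ε := by
      have h1 : γ / 2 * t * ‖z - x‖ ^ 2 ≤ γ / 2 * t * (‖z - x‖ ^ 2 + 1) := by
        nlinarith [ht]
      have h2 : γ / 2 * t * (‖z - x‖ ^ 2 + 1) ≤ ε := by
        have := (le_div_iff₀ hden).mp htle
        nlinarith [this]
      linarith
    nlinarith [hk]
  linarith [main]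

lemma strong_mono_s4 {E : Type*} [NormedAddCommGroup E] [InnerProductSpace ℝ E]
    {γ : ℝ} {G : E → ℝ} (hG : IsStronglyConvex γ G) {g g' x x' : E}
    (hg : IsSubgradientAt G g x) (hg' : IsSubgradientAt G g' x') :
    γ * ‖x - x'‖ ^ 2 ≤ ⟪g - g', x - x'⟫ := by
  have h1 := strong_subgrad hG hg x'
  have h2 := strong_subgrad hG hg' x
  have e1 : ⟪g, x' - x⟫ = -⟪g, x - x'⟫ := by
    rw [show x' - x = -(x - x') by abel, inner_neg_right]
  have e2 : ‖x' - x‖ = ‖x - x'‖ := norm_sub_rev _ _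
  rw [e1, e2] at h1
  rw [inner_sub_left]
  linarith

lemma quad_ineq (p q c a b : ℝ) (hp : 0 ≤ p) (hq : 0 ≤ q) (hc : 0 ≤ c)
    (ha : 0 ≤ a) (hb : 0 ≤ b) (h : c ^ 2 ≤ 4 * p * q) :
    c * a * b ≤ p * a ^ 2 + q * b ^ 2 := by
  rcases eq_or_lt_of_le hq with hq0 | hq0
  · have hc00 : c = 0 := by nlinarith [sq_nonneg c]
    subst hc00
    rw [← hq0]
    nlinarith [mul_nonneg hp (sq_nonneg a)]
  · have hid : 4 * q * (p * a ^ 2 + q * b ^ 2 - c * a * b)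
        = (c * a - 2 * q * b) ^ 2 + (4 * p * q - c ^ 2) * a ^ 2 := by ring
    have h4 : 0 ≤ 4 * q * (p * a ^ 2 + q * b ^ 2 - c * a * b) := by
      rw [hid]
      exact add_nonneg (sq_nonneg _) (mul_nonneg (sub_nonneg.mpr h) (sq_nonneg a))
    nlinarith [h4, hq0]


/-- Strong monotonicity of the mismatched saddle-point operator
`(x, y) ↦ (∂G(x) + V*y, ∂F*(y) − Ax)` when `γ_G γ_{F*} > ‖A − V‖²/4`. -/
theorem pddr_mismatch_operator_strongly_monotone
    {X Y : Type*} [NormedAddCommGroup X] [InnerProductSpace ℝ X] [CompleteSpace X]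
    [NormedAddCommGroup Y] [InnerProductSpace ℝ Y] [CompleteSpace Y]
    (A V : X →L[ℝ] Y) (G : X → ℝ) (Fs : Y → ℝ) (γG γFs : ℝ)
    (hG : IsStronglyConvex γG G) (hFs : IsStronglyConvex γFs Fs)
    (hcond : (1 / 4) * ‖A - V‖ ^ 2 < γG * γFs) :
    ∃ μ : ℝ, 0 < μ ∧
      ∀ (x x' g g' : X) (y y' f f' : Y),
        IsSubgradientAt G g x → IsSubgradientAt G g' x' →
        IsSubgradientAt Fs f y → IsSubgradientAt Fs f' y' →
        μ * (‖x - x'‖ ^ 2 + ‖y - y'‖ ^ 2) ≤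
          ⟪(g + (ContinuousLinearMap.adjoint V) y) -
              (g' + (ContinuousLinearMap.adjoint V) y'), x - x'⟫ +
            ⟪(f - A x) - (f' - A x'), y - y'⟫ := by
  have hγG := hG.1
  have hγFs := hFs.1
  set c : ℝ := ‖A - V‖ with hc
  have hc0 : 0 ≤ c := norm_nonneg _
  set μ : ℝ := min (min γG γFs) ((γG * γFs - c ^ 2 / 4) / (γG + γFs)) with hμdef
  have hnum : 0 < γG * γFs - c ^ 2 / 4 := by nlinarith [hcond]
  have hden : 0 < γG + γFs := by linarith
  have hμpos : 0 < μ := lt_min (lt_min hγG hγFs) (div_pos hnum hden)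
  refine ⟨μ, hμpos, ?_⟩
  intro x x' g g' y y' f f' hgx hgx' hfy hfy'
  set a : ℝ := ‖x - x'‖ with ha
  set b : ℝ := ‖y - y'‖ with hb
  have hmonoG : γG * a ^ 2 ≤ ⟪g - g', x - x'⟫ := strong_mono_s4 hG hgx hgx'
  have hmonoF : γFs * b ^ 2 ≤ ⟪f - f', y - y'⟫ := strong_mono_s4 hFs hfy hfy'
  -- cross term
  have hcross : -(c * a * b) ≤ ⟪(ContinuousLinearMap.adjoint V) (y - y'), x - x'⟫
      - ⟪A (x - x'), y - y'⟫ := by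
    have h1 : ⟪(ContinuousLinearMap.adjoint V) (y - y'), x - x'⟫ = ⟪y - y', V (x - x')⟫ :=
      ContinuousLinearMap.adjoint_inner_left V _ _
    have h2 : ⟪y - y', V (x - x')⟫ - ⟪A (x - x'), y - y'⟫
        = ⟪(V - A) (x - x'), y - y'⟫ := by
      rw [real_inner_comm (V (x - x')) (y - y'), ContinuousLinearMap.sub_apply, inner_sub_left]
    rw [h1, h2]
    have h3 : |⟪(V - A) (x - x'), y - y'⟫| ≤ ‖(V - A) (x - x')‖ * b :=
      abs_real_inner_le_norm _ _
    have h4 : ‖(V - A) (x - x')‖ ≤ c * a := by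
      have := (V - A).le_opNorm (x - x')
      rwa [norm_sub_rev, ← hc, ← ha] at this
    have hb0 : (0:ℝ) ≤ b := norm_nonneg _
    have h6 : ‖(V - A) (x - x')‖ * b ≤ c * a * b := mul_le_mul_of_nonneg_right h4 hb0
    have h7 := neg_abs_le ⟪(V - A) (x - x'), y - y'⟫
    linarith [h3, h6, h7]
  -- expand the RHS
  have hexp : ⟪(g + (ContinuousLinearMap.adjoint V) y) -
        (g' + (ContinuousLinearMap.adjoint V) y'), x - x'⟫ +
      ⟪(f - A x) - (f' - A x'), y - y'⟫
      = ⟪g - g', x - x'⟫ + ⟪f - f', y - y'⟫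
        + (⟪(ContinuousLinearMap.adjoint V) (y - y'), x - x'⟫ - ⟪A (x - x'), y - y'⟫) := by
    simp only [map_sub, inner_sub_left, inner_add_left]
    ring
  rw [hexp]
  have ha0 : (0:ℝ) ≤ a := norm_nonneg _
  have hb0 : (0:ℝ) ≤ b := norm_nonneg _
  have hμG : μ ≤ γG := le_trans (min_le_left _ _) (min_le_left _ _)
  have hμF : μ ≤ γFs := le_trans (min_le_left _ _) (min_le_right _ _)
  have hμq : μ ≤ (γG * γFs - c ^ 2 / 4) / (γG + γFs) := min_le_right _ _
  have h1 : μ * (γG + γFs) ≤ γG * γFs - c ^ 2 / 4 := by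
    have := (le_div_iff₀ hden).mp hμq
    linarith
  have hq : c ^ 2 ≤ 4 * (γG - μ) * (γFs - μ) := by nlinarith [sq_nonneg μ, h1]
  have hkey : c * a * b ≤ (γG - μ) * a ^ 2 + (γFs - μ) * b ^ 2 :=
    quad_ineq _ _ _ _ _ (by linarith) (by linarith) hc0 ha0 hb0 hq
  nlinarith [hmonoG, hmonoF, hcross, hkey]
end

section
/- Let Z be a real vector space, let 𝓐, 𝓑 : Z → Set Z be set-valued mappings, let u ∈ Z, and let α, γ be real numbers with γ ≠ 0. Then the following are equivalent: (i) there exist a ∈ 𝓐(u) and b ∈ 𝓑(u) with a + b = 0; (ii) there exist r, s ∈ Z such that u = s, there exists a ∈ 𝓐(u) with α·u + γ·a − r − s = 0, and there exists b ∈ 𝓑(s) with (1 − 2α)·u + r + α·s + γ·b = 0. -/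
/-- Lifting of the inclusion `0 ∈ 𝓐u + 𝓑u` to the block operator `𝔸_α` with rows
`(αI + γ𝓐, −I, −I)`, `(I, 0, −I)`, `((1−2α)I, I, αI + γ𝓑)`. -/
theorem lifted_inclusion_equivalence
    {Z : Type*} [AddCommGroup Z] [Module ℝ Z]
    (𝓐 𝓑 : Z → Set Z) (u : Z) (α γ : ℝ) (hγ : γ ≠ 0) :
    (∃ a ∈ 𝓐 u, ∃ b ∈ 𝓑 u, a + b = 0) ↔
      (∃ r s : Z, u = s ∧
        (∃ a ∈ 𝓐 u, α • u + γ • a - r - s = 0) ∧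
        (∃ b ∈ 𝓑 s, (1 - 2 * α) • u + r + α • s + γ • b = 0)) := by
  constructor
  · rintro ⟨a, ha, b, hb, hab⟩
    refine ⟨α • u + γ • a - u, u, rfl, ⟨a, ha, by abel⟩, ⟨b, hb, ?_⟩⟩
    have : γ • a + γ • b = 0 := by rw [← smul_add, hab, smul_zero]
    have h2 : (1 - 2 * α) • u + α • u + α • u = u := by
      rw [← add_smul, ← add_smul]; ring_nf; exact one_smul ℝ u
    calc (1 - 2 * α) • u + (α • u + γ • a - u) + α • u + γ • b
        = ((1 - 2 * α) • u + α • u + α • u) - u + (γ • a + γ • b) := by abel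
      _ = 0 := by rw [h2, this]; abel
  · rintro ⟨r, s, rfl, ⟨a, ha, h1⟩, ⟨b, hb, h2⟩⟩
    refine ⟨a, ha, b, hb, ?_⟩
    have : γ • (a + b) = 0 := by
      have := congrArg (· + ·) h1
      have h3 : (α • u + γ • a - r - u) + ((1 - 2 * α) • u + r + α • u + γ • b) = 0 := by
        rw [h1, h2]; abel
      have h4 : γ • a + γ • b + ((α • u + α • u + (1 - 2 * α) • u) - u) = 0 := by
        rw [← h3]; abel
      have h5 : α • u + α • u + (1 - 2 * α) • u = u := by
        rw [← add_smul, ← add_smul]; ring_nf; exact one_smul ℝ u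
      rw [h5] at h4
      rw [smul_add]
      simpa using h4
    exact (smul_eq_zero.mp this).resolve_left hγ
end

section
/- Let Z be a real vector space, 𝓐, 𝓑 : Z → Set Z set-valued mappings, α, γ real numbers with α ≠ −1, and set τ = γ/(1 + α). For any ū, v₁, v₂, v₃ ∈ Z, the following are equivalent: (i) there exist a ∈ 𝓐(v₁) and b ∈ 𝓑(v₃) such that (v₁ + v₂ + v₃) + α·v₁ + γ·a − v₂ − v₃ = ū, (v₁ + v₂ + v₃) + v₁ − v₃ = ū, and (v₁ + v₂ + v₃) + (1 − 2α)·v₁ + v₂ + α·v₃ + γ·b = ū; (ii) there exists a ∈ 𝓐(v₁) with v₁ + τ·a = (1/(1+α))·ū, v₂ = ū − 2·v₁, and there exists b ∈ 𝓑(v₃) with v₃ + τ·b = 2·v₁ − (1/(1+α))·ū. -/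
/-- Resolvent computation showing that the all-ones block operator `M` is an admissible
preconditioner for the lifted operator `𝔸_α`: the inclusion `Mū ∈ (M + 𝔸_α)v` is solved by
`v₁ = J_{τ𝓐}(ū/(1+α))`, `v₂ = ū − 2v₁`, `v₃ = J_{τ𝓑}(2v₁ − ū/(1+α))`. -/
theorem preconditioner_resolvent_characterization
    {Z : Type*} [AddCommGroup Z] [Module ℝ Z]
    (𝓐 𝓑 : Z → Set Z) (α γ : ℝ) (hα : α ≠ -1) (τ : ℝ) (hτ : τ = γ / (1 + α))
    (ub v₁ v₂ v₃ : Z) :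
    (∃ a ∈ 𝓐 v₁, ∃ b ∈ 𝓑 v₃,
        (v₁ + v₂ + v₃) + α • v₁ + γ • a - v₂ - v₃ = ub ∧
        (v₁ + v₂ + v₃) + v₁ - v₃ = ub ∧
        (v₁ + v₂ + v₃) + (1 - 2 * α) • v₁ + v₂ + α • v₃ + γ • b = ub) ↔
      ((∃ a ∈ 𝓐 v₁, v₁ + τ • a = (1 / (1 + α)) • ub) ∧
        v₂ = ub - (2 : ℝ) • v₁ ∧
        (∃ b ∈ 𝓑 v₃, v₃ + τ • b = (2 : ℝ) • v₁ - (1 / (1 + α)) • ub)) := by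
  have h1 : (1 + α) ≠ 0 := fun h => hα (by linarith)
  subst hτ
  constructor
  · rintro ⟨a, ha, b, hb, e1, e2, e3⟩
    have e1' : (1 + α) • v₁ + γ • a = ub := by
      linear_combination (norm := module) e1
    have e2' : v₂ = ub - (2 : ℝ) • v₁ := by
      linear_combination (norm := module) e2
    have e3' : (1 + α) • v₃ + γ • b = (2 + 2 * α) • v₁ - ub := by
      linear_combination (norm := module) e3 - (2 : ℝ) • e2
    refine ⟨⟨a, ha, ?_⟩, e2', ⟨b, hb, ?_⟩⟩
    · rw [← e1']
      match_scalars <;> field_simp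
    · have hub : ub = (2 + 2 * α) • v₁ - ((1 + α) • v₃ + γ • b) := by
        rw [e3']; abel
      rw [hub]
      match_scalars <;> field_simp <;> ring
  · rintro ⟨⟨a, ha, ea⟩, hv₂, b, hb, eb⟩
    have e1' : (1 + α) • v₁ + γ • a = ub := by
      calc (1 + α) • v₁ + γ • a = (1 + α) • (v₁ + (γ / (1 + α)) • a) := by
            match_scalars <;> field_simp
        _ = (1 + α) • ((1 / (1 + α)) • ub) := by rw [ea]
        _ = ub := by match_scalars; field_simp
    have e3' : (1 + α) • v₃ + γ • b = (2 + 2 * α) • v₁ - ub := by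
      calc (1 + α) • v₃ + γ • b = (1 + α) • (v₃ + (γ / (1 + α)) • b) := by
            match_scalars <;> field_simp
        _ = (1 + α) • ((2 : ℝ) • v₁ - (1 / (1 + α)) • ub) := by rw [eb]
        _ = (2 + 2 * α) • v₁ - ub := by match_scalars <;> field_simp <;> ring
    refine ⟨a, ha, b, hb, ?_, ?_, ?_⟩
    · linear_combination (norm := module) e1'
    · rw [hv₂]; module
    · linear_combination (norm := module) e3' + (2 : ℝ) • hv₂
end

section
/- Let E be a real inner product space and let μ, μ̃, γ, α be real numbers with μ > μ̃ > 0, γ > 0 and α ≥ γ·μ·μ̃/(μ − μ̃). Then for all x, y ∈ E: (α + γμ)·‖x‖² − 2α·⟪x, y⟫ + (α − γμ̃)·‖y‖² ≥ 0. -/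
open scoped RealInnerProductSpace

/-- The quadratic-form inequality behind the monotonicity of the lifted operator `𝔸_α`:
if `α ≥ γμμ̃/(μ − μ̃)` with `μ > μ̃ > 0` and `γ > 0`, then
`(α + γμ)‖x‖² − 2α⟪x, y⟫ + (α − γμ̃)‖y‖² ≥ 0`. -/
theorem lifted_operator_quadratic_form_nonneg
    {E : Type*} [NormedAddCommGroup E] [InnerProductSpace ℝ E]
    (μ μt γ α : ℝ) (hμt : 0 < μt) (hμ : μt < μ) (hγ : 0 < γ)
    (hα : γ * μ * μt / (μ - μt) ≤ α) (x y : E) :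
    0 ≤ (α + γ * μ) * ‖x‖ ^ 2 - 2 * α * ⟪x, y⟫ + (α - γ * μt) * ‖y‖ ^ 2 := by
  have hsub : (0:ℝ) < μ - μt := by linarith
  have hα' : γ * μ * μt ≤ α * (μ - μt) := by
    rw [div_le_iff₀ hsub] at hα; linarith
  have hαpos : 0 < α := by nlinarith [mul_pos (mul_pos hγ (hμt.trans hμ)) hμt]
  have hxy : ⟪x, y⟫ ≤ ‖x‖ * ‖y‖ := real_inner_le_norm x y
  have hx : (0:ℝ) ≤ ‖x‖ := norm_nonneg x
  have hy : (0:ℝ) ≤ ‖y‖ := norm_nonneg y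
  have key : α ^ 2 ≤ (α + γ * μ) * (α - γ * μt) := by nlinarith
  have h1 : 2 * α * ⟪x, y⟫ ≤ 2 * α * (‖x‖ * ‖y‖) := by nlinarith
  have ha : 0 < α + γ * μ := by nlinarith [mul_pos hγ (hμt.trans hμ)]
  have h2 : 0 ≤ (α + γ * μ) * ‖x‖ ^ 2 - 2 * α * (‖x‖ * ‖y‖) + (α - γ * μt) * ‖y‖ ^ 2 := by
    rw [← mul_nonneg_iff_of_pos_left ha]
    nlinarith [sq_nonneg ((α + γ * μ) * ‖x‖ - α * ‖y‖),
      mul_nonneg (sub_nonneg.2 key) (sq_nonneg ‖y‖)]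
  linarith
end

section
/- Let X be a real inner product space, η > 0, and K : X → X a map satisfying ⟪K(u) − K(v), u − v⟫ ≥ η·‖u − v‖² for all u, v ∈ X. Let λ be a real number with 0 < λ ≤ 2·(1 + η)/(1 + 2η). Suppose p, x, p⁺, p* ∈ X satisfy x + K(x) = p (i.e., x = J_K(p)), K(p*) = 0 (i.e., p* = J_K(p*)), and p⁺ = p + λ·(x − p). Then ‖p⁺ − p*‖ ≤ ((1 + (1 − λ)·η)/(1 + η))·‖p − p*‖. -/
open scoped RealInnerProductSpace

set_option maxHeartbeats 1000000 in
/-- One-step contraction estimate for the relaxed resolvent iteration of an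
`η`-strongly monotone operator `K`: if `x = J_K(p)`, `p* = J_K(p*)` and
`p⁺ = p + λ(x − p)` with `0 < λ ≤ 2(1+η)/(1+2η)`, then
`‖p⁺ − p*‖ ≤ ((1 + (1−λ)η)/(1+η))‖p − p*‖`. -/
theorem relaxed_resolvent_contraction
    {X : Type*} [NormedAddCommGroup X] [InnerProductSpace ℝ X]
    (η : ℝ) (hη : 0 < η) (K : X → X)
    (hK : ∀ u v : X, η * ‖u - v‖ ^ 2 ≤ ⟪K u - K v, u - v⟫)
    (lam : ℝ) (hlam0 : 0 < lam) (hlam : lam ≤ 2 * (1 + η) / (1 + 2 * η))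
    (p x pplus pstar : X)
    (hx : x + K x = p) (hstar : K pstar = 0)
    (hplus : pplus = p + lam • (x - p)) :
    ‖pplus - pstar‖ ≤ ((1 + (1 - lam) * η) / (1 + η)) * ‖p - pstar‖ := by
  have h2η : (0:ℝ) < 1 + 2 * η := by linarith
  have h1η : (0:ℝ) < 1 + η := by linarith
  have hlam' : lam * (1 + 2 * η) ≤ 2 * (1 + η) := by
    rwa [le_div_iff₀ h2η] at hlam
  have hc : 0 < 1 + η - lam * η := by nlinarith
  set d := p - pstar with hd
  set e := x - pstar with he
  have hKx : K x = p - x := by rw [← hx]; abel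
  have h1 : (1 + η) * ‖e‖ ^ 2 ≤ ⟪d, e⟫ := by
    have h := hK x pstar
    rw [hKx, hstar, sub_zero] at h
    have hpx : p - x = d - e := by rw [hd, he]; abel
    rw [hpx, inner_sub_left, real_inner_self_eq_norm_sq] at h
    linarith
  have hCS : ⟪d, e⟫ ≤ ‖d‖ * ‖e‖ := real_inner_le_norm d e
  have hE : (1 + η) ^ 2 * ‖e‖ ^ 2 ≤ ‖d‖ ^ 2 := by
    rcases eq_or_lt_of_le (norm_nonneg e) with h0 | h0
    · rw [← h0]; nlinarith [norm_nonneg d]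
    · have hde : (1 + η) * ‖e‖ ≤ ‖d‖ := by
        have ht : (1 + η) * ‖e‖ ^ 2 ≤ ‖d‖ * ‖e‖ := h1.trans hCS
        have : ((1 + η) * ‖e‖) * ‖e‖ ≤ ‖d‖ * ‖e‖ := by nlinarith
        exact le_of_mul_le_mul_right this h0
      nlinarith [mul_self_le_mul_self (mul_nonneg h1η.le (norm_nonneg e)) hde]
  have hs : 2 * (1 + η) * ⟪d, e⟫ ≤ ‖d‖ ^ 2 + (1 + η) ^ 2 * ‖e‖ ^ 2 := by
    nlinarith [sq_nonneg (‖d‖ - (1 + η) * ‖e‖), hCS, h1η]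
  have hpe : pplus - pstar = (1 - lam) • d + lam • e := by
    rw [hplus, hd, he]; module
  have hexp : ‖pplus - pstar‖ ^ 2
      = (1 - lam) ^ 2 * ‖d‖ ^ 2 + 2 * ((1 - lam) * lam) * ⟪d, e⟫ + lam ^ 2 * ‖e‖ ^ 2 := by
    rw [hpe, norm_add_sq_real, norm_smul, norm_smul, real_inner_smul_left,
      real_inner_smul_right]
    simp only [mul_pow, sq_abs, Real.norm_eq_abs]
    ring
  have key : (1 + η) ^ 2 * ‖pplus - pstar‖ ^ 2 ≤ (1 + (1 - lam) * η) ^ 2 * ‖d‖ ^ 2 := by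
    rw [hexp]
    rcases le_or_gt lam 1 with hl | hl
    · have c1 : (0:ℝ) ≤ (1 - lam) * lam * (1 + η) :=
        mul_nonneg (mul_nonneg (by linarith) hlam0.le) h1η.le
      have A1 := mul_le_mul_of_nonneg_left hs c1
      have c2 : (0:ℝ) ≤ lam * (1 + η - lam * η) := mul_nonneg hlam0.le hc.le
      have A2 := mul_le_mul_of_nonneg_left hE c2
      nlinarith [A1, A2]
    · have c1 : (0:ℝ) ≤ 2 * lam * (lam - 1) * (1 + η) ^ 2 :=
        mul_nonneg (mul_nonneg (mul_nonneg (by linarith) (by linarith)) (by linarith))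
          (by positivity)
      have A1 := mul_le_mul_of_nonneg_left h1 c1
      have c2 : (0:ℝ) ≤ lam * (2 * (1 + η) - lam * (1 + 2 * η)) :=
        mul_nonneg hlam0.le (by linarith)
      have A2 := mul_le_mul_of_nonneg_left hE c2
      nlinarith [A1, A2]
  rw [div_mul_eq_mul_div, le_div_iff₀ h1η]
  nlinarith [key, norm_nonneg (pplus - pstar),
    mul_nonneg (by nlinarith : (0:ℝ) ≤ 1 + (1 - lam) * η) (norm_nonneg d), norm_nonneg d]
end

section
/- Let X be a real inner product space, η > 0, and K : X → X a map satisfying ⟪K(u) − K(v), u − v⟫ ≥ η·‖u − v‖² for all u, v ∈ X. Let λ be a real number with 0 < λ ≤ 2·(1 + η)/(1 + 2η). Suppose sequences (x^k) and (p^k) in X satisfy x^k + K(x^k) = p^k and p^{k+1} = p^k + λ·(x^k − p^k) for all k, and suppose p* ∈ X satisfies K(p*) = 0. Then for all k: ‖p^k − p*‖ ≤ ((1 + (1 − λ)·η)/(1 + η))^k · ‖p^0 − p*‖; in particular the sequence (p^k) converges linearly to p*. -/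
open scoped RealInnerProductSpace

/-- Linear convergence of the relaxed resolvent iteration
`p^{k+1} = p^k + λ(J_K(p^k) − p^k)` for an `η`-strongly monotone operator `K`:
`‖p^k − p*‖ ≤ ((1 + (1−λ)η)/(1+η))^k ‖p^0 − p*‖`. -/
theorem relaxed_resolvent_linear_convergence
    {X : Type*} [NormedAddCommGroup X] [InnerProductSpace ℝ X]
    (η : ℝ) (hη : 0 < η) (K : X → X)
    (hK : ∀ u v : X, η * ‖u - v‖ ^ 2 ≤ ⟪K u - K v, u - v⟫)
    (lam : ℝ) (hlam0 : 0 < lam) (hlam : lam ≤ 2 * (1 + η) / (1 + 2 * η))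
    (x p : ℕ → X) (pstar : X)
    (hx : ∀ k, x k + K (x k) = p k)
    (hp : ∀ k, p (k + 1) = p k + lam • (x k - p k))
    (hstar : K pstar = 0) :
    ∀ k, ‖p k - pstar‖ ≤ ((1 + (1 - lam) * η) / (1 + η)) ^ k * ‖p 0 - pstar‖ := by
  have hη1 : (0:ℝ) < 1 + η := by linarith
  have hη2 : (0:ℝ) < 1 + 2 * η := by linarith
  have hlam' : lam * (1 + 2 * η) ≤ 2 * (1 + η) := by
    rwa [← le_div_iff₀ hη2]
  have hA : 0 ≤ 1 + (1 - lam) * η := by nlinarith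
  have hC : 0 ≤ (1 + (1 - lam) * η) / (1 + η) := div_nonneg hA hη1.le
  -- one-step estimate
  have key : ∀ k, ‖p (k + 1) - pstar‖ ≤
      (1 + (1 - lam) * η) / (1 + η) * ‖p k - pstar‖ := by
    intro k
    set d := p k - pstar with hd
    set e := x k - pstar with he
    have hde : p (k + 1) - pstar = (1 - lam) • d + lam • e := by
      rw [hp k, hd, he]
      module
    have hKd : d = e + (K (x k) - K pstar) := by
      rw [hd, he, hstar, ← hx k]
      abel
    have hm := hK (x k) pstar
    have h1 : (1 + η) * ‖e‖ ^ 2 ≤ ⟪d, e⟫ := by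
      rw [hKd, inner_add_left, real_inner_self_eq_norm_sq]
      rw [← he] at hm
      nlinarith
    have h2 : ⟪d, e⟫ ≤ ‖d‖ * ‖e‖ := real_inner_le_norm d e
    have he_le : (1 + η) * ‖e‖ ≤ ‖d‖ := by
      rcases eq_or_lt_of_le (norm_nonneg e) with h0 | h0
      · rw [← h0]; simpa using norm_nonneg d
      · nlinarith
    rcases le_or_gt lam 1 with hl1 | hl1
    · -- triangle inequality case
      have : ‖(1 - lam) • d + lam • e‖ ≤ (1 - lam) * ‖d‖ + lam * ‖e‖ := by
        calc ‖(1 - lam) • d + lam • e‖ ≤ ‖(1 - lam) • d‖ + ‖lam • e‖ := norm_add_le _ _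
          _ = (1 - lam) * ‖d‖ + lam * ‖e‖ := by
              rw [norm_smul, norm_smul, Real.norm_of_nonneg (by linarith),
                Real.norm_of_nonneg hlam0.le]
      rw [hde, div_mul_eq_mul_div, le_div_iff₀ hη1]
      nlinarith [norm_nonneg d, norm_nonneg e]
    · -- overrelaxed case: work with squares
      have heq : ‖p (k + 1) - pstar‖ ^ 2 =
          (1 - lam) ^ 2 * ‖d‖ ^ 2 + 2 * ((1 - lam) * lam * ⟪d, e⟫)
            + lam ^ 2 * ‖e‖ ^ 2 := by
        rw [hde, norm_add_sq_real, norm_smul, norm_smul, real_inner_smul_left,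
          real_inner_smul_right, Real.norm_eq_abs, Real.norm_eq_abs, mul_pow,
          mul_pow, sq_abs, sq_abs]
        ring
      have hIle : (1 - lam) * lam * ⟪d, e⟫ ≤
          (1 - lam) * lam * ((1 + η) * ‖e‖ ^ 2) := by
        apply mul_le_mul_of_nonpos_left h1
        nlinarith
      have hce : 0 ≤ 2 * ((1 - lam) * lam) * (1 + η) + lam ^ 2 := by nlinarith
      have hE2 : ‖e‖ ^ 2 * (1 + η) ^ 2 ≤ ‖d‖ ^ 2 := by
        nlinarith [norm_nonneg e, norm_nonneg d]
      have hsq : ((1 + η) * ‖p (k + 1) - pstar‖) ^ 2 ≤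
          ((1 + (1 - lam) * η) * ‖d‖) ^ 2 := by
        have hmul : (2 * ((1 - lam) * lam) * (1 + η) + lam ^ 2) * (‖e‖ ^ 2 * (1 + η) ^ 2)
            ≤ (2 * ((1 - lam) * lam) * (1 + η) + lam ^ 2) * ‖d‖ ^ 2 :=
          mul_le_mul_of_nonneg_left hE2 hce
        have hIle2 : 2 * ((1 - lam) * lam * ⟪d, e⟫) ≤
            2 * ((1 - lam) * lam * ((1 + η) * ‖e‖ ^ 2)) := by linarith
        have h3 := mul_le_mul_of_nonneg_left hIle2 (sq_nonneg (1 + η))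
        have heq2 : (1 + η) ^ 2 * ‖p (k + 1) - pstar‖ ^ 2 =
            (1 + η) ^ 2 * ((1 - lam) ^ 2 * ‖d‖ ^ 2 + 2 * ((1 - lam) * lam * ⟪d, e⟫)
              + lam ^ 2 * ‖e‖ ^ 2) := by rw [heq]
        linarith [heq2, h3, hmul]
      have hfin : (1 + η) * ‖p (k + 1) - pstar‖ ≤ (1 + (1 - lam) * η) * ‖d‖ := by
        have hn : 0 ≤ (1 + η) * ‖p (k + 1) - pstar‖ :=
          mul_nonneg hη1.le (norm_nonneg _)
        have hn2 : 0 ≤ (1 + (1 - lam) * η) * ‖d‖ := mul_nonneg hA (norm_nonneg _)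
        exact (pow_le_pow_iff_left₀ hn hn2 two_ne_zero).mp hsq
      rw [div_mul_eq_mul_div, le_div_iff₀ hη1]
      linarith [hfin]
  intro k
  induction k with
  | zero => simp
  | succ n ih =>
    calc ‖p (n + 1) - pstar‖ ≤ (1 + (1 - lam) * η) / (1 + η) * ‖p n - pstar‖ := key n
      _ ≤ (1 + (1 - lam) * η) / (1 + η) *
          (((1 + (1 - lam) * η) / (1 + η)) ^ n * ‖p 0 - pstar‖) :=
        mul_le_mul_of_nonneg_left ih hC
      _ = ((1 + (1 - lam) * η) / (1 + η)) ^ (n + 1) * ‖p 0 - pstar‖ := by ring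
end

section
/- Let X and Y be real Hilbert spaces, A, V : X → Y bounded linear operators, G : X → ℝ a γ_G-strongly convex function and F* : Y → ℝ a γ_{F*}-strongly convex function. Let constants satisfy 0 < μ̃_G < μ_G < γ_G, 0 < μ̃_{F*} < μ_{F*} < γ_{F*}, and μ̃_G·μ̃_{F*} ≥ (1/4)·‖A − V‖². Set c = min{(μ_G − μ̃_G)/(μ_G·μ̃_G), (μ_{F*} − μ̃_{F*})/(μ_{F*}·μ̃_{F*})} and υ = min{γ_G − μ_G, γ_{F*} − μ_{F*}}. Let τ satisfy 0 < τ < 1/‖A − V‖ and 0 < τ < c, let α ≥ τ/(c − τ) with α > 0, and set γ = (1 + α)·τ. Let B_Σ : X × Y → X × Y be the bounded linear operator B_Σ(x, y) = (μ̃_G·x + V*(y), μ̃_{F*}·y − A(x)); let ℓ > 0 satisfy ‖B_Σ(z)‖ ≤ ℓ·‖z‖ for all z ∈ X × Y, and let σ > 0 satisfy ⟪B_Σ(z), z⟫ ≥ σ·‖z‖² for all z ∈ X × Y. Set η = (4γ/27)·min{ υ/(1 + 2α)², σ/(4γ²ℓ² + (α + γ·max{μ̃_G, μ̃_{F*}})²)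 }. Let θ satisfy 0 < θ and θ·(1 + α) ≤ 2·(1 + η)/(1 + 2η). Suppose sequences (x^k), (v^k), (p^k) in X and (y^k), (w^k), (q^k) in Y follow the primal-dual Douglas–Rachford iteration with mismatched adjoint with step size τ and relaxation parameter θ, and suppose x̂ ∈ X, ŷ ∈ Y are such that −V*(ŷ) is a subgradient of G at x̂ and A(x̂) is a subgradient of F* at ŷ. Then there exists C ≥ 0 such that for all N ∈ ℕ: √(‖x^N − x̂‖² + ‖y^N − ŷ‖²) ≤ C·((1 + (1 − θ·(1 + α))·η)/(1 + η))^N; in particular the iterates (x^N, y^N) converge linearly (in norm) to (x̂, ŷ). -/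
open scoped RealInnerProductSpace

theorem subgrad_strong_ineq {E : Type*} [NormedAddCommGroup E] [InnerProductSpace ℝ E]
    {γ : ℝ} {f : E → ℝ} (hf : IsStronglyConvex γ f) {s x : E}
    (hs : IsSubgradientAt f s x) (z : E) :
    f x + ⟪s, z - x⟫ + γ / 2 * ‖z - x‖ ^ 2 ≤ f z := by
  obtain ⟨hγ, hconv⟩ := hf
  have hN : (0:ℝ) ≤ ‖z - x‖^2 := sq_nonneg _
  have key : ∀ t : ℝ, 0 < t → t ≤ 1 →
      f x + ⟪s, z - x⟫ + γ/2 * ‖z - x‖^2 ≤ f z + γ/2 * t * ‖z - x‖^2 := by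
    intro t ht0 ht1
    have hc := hconv.2 (Set.mem_univ x) (Set.mem_univ z)
      (by linarith : (0:ℝ) ≤ 1 - t) ht0.le (by ring)
    have hsub := hs ((1 - t) • x + t • z)
    have hpt : (1 - t) • x + t • z - x = t • (z - x) := by module
    have hpt2 : (1 - t) • x + t • z = x + t • (z - x) := by module
    rw [hpt, real_inner_smul_right] at hsub
    have hnorm : ‖(1 - t) • x + t • z‖^2
        = ‖x‖^2 + 2 * t * ⟪x, z - x⟫ + t^2 * ‖z - x‖^2 := by
      rw [hpt2, norm_add_sq_real, real_inner_smul_right, norm_smul,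
        Real.norm_eq_abs, abs_of_pos ht0, mul_pow]
      ring
    have hz2 : ‖z‖^2 = ‖x‖^2 + 2 * ⟪x, z - x⟫ + ‖z - x‖^2 := by
      have h0 : z = x + (z - x) := by abel
      conv_lhs => rw [h0]
      rw [norm_add_sq_real]
    simp only [smul_eq_mul] at hc
    rw [hnorm, hz2] at hc
    have hmain : t * (f x + ⟪s, z - x⟫ + γ/2 * ‖z - x‖^2)
        ≤ t * (f z + γ/2 * t * ‖z - x‖^2) := by nlinarith [hsub, hc]
    exact le_of_mul_le_mul_left hmain ht0
  refine le_of_forall_pos_le_add ?_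
  intro ε hε
  have hd : (0:ℝ) < 1 + γ/2 * ‖z - x‖^2 := by positivity
  set t : ℝ := min 1 (ε / (1 + γ/2 * ‖z - x‖^2)) with hts
  have ht0 : 0 < t := lt_min one_pos (div_pos hε hd)
  have ht1 : t ≤ 1 := min_le_left _ _
  have h2 : γ/2 * t * ‖z - x‖^2 ≤ ε := by
    have htd : t ≤ ε / (1 + γ/2 * ‖z - x‖^2) := min_le_right _ _
    rw [le_div_iff₀ hd] at htd
    nlinarith [ht0]
  linarith [key t ht0 ht1]

theorem subgrad_mono {E : Type*} [NormedAddCommGroup E] [InnerProductSpace ℝ E]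
    {γ : ℝ} {f : E → ℝ} (hf : IsStronglyConvex γ f) {s₁ s₂ x₁ x₂ : E}
    (h1 : IsSubgradientAt f s₁ x₁) (h2 : IsSubgradientAt f s₂ x₂) :
    γ * ‖x₁ - x₂‖ ^ 2 ≤ ⟪s₁ - s₂, x₁ - x₂⟫ := by
  have a1 := subgrad_strong_ineq hf h1 x₂
  have a2 := subgrad_strong_ineq hf h2 x₁
  have hn : ‖x₂ - x₁‖ = ‖x₁ - x₂‖ := norm_sub_rev _ _
  have hi1 : ⟪s₁, x₂ - x₁⟫ = - ⟪s₁, x₁ - x₂⟫ := by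
    rw [← inner_neg_right]
    congr 1
    abel
  rw [hn, hi1] at a1
  rw [inner_sub_left]
  linarith

lemma inner_dr_id {E : Type*} [NormedAddCommGroup E] [InnerProductSpace ℝ E] (a b d : E) :
    ⟪a - b, d⟫ = ⟪d - a, a⟫ + ⟪(2:ℝ)•a - b - d, b⟫ + ‖a - b‖^2 := by
  have h1 : ‖a - b‖^2 = ⟪a,a⟫ - 2*⟪a,b⟫ + ⟪b,b⟫ := by
    rw [← real_inner_self_eq_norm_sq]
    simp only [inner_sub_left, inner_sub_right]
    rw [real_inner_comm b a]; ring
  simp only [inner_sub_left, inner_sub_right, real_inner_smul_left]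
  rw [h1, real_inner_comm d a, real_inner_comm d b]
  ring

lemma rate_step (η α θ M P E : ℝ) (hη : 0 < η) (hα : 0 < α) (hθ : 0 < θ)
    (hΘ : θ*(1+α)*(1+2*η) ≤ 2*(1+η)) (hM : 0 ≤ M) (hE : 0 ≤ E)
    (hCS : P^2 ≤ M*E)
    (h1 : (1+η)*M + η*(1+α)^2*E ≤ (1+2*η)*(1+α)*P) :
    E - 2*θ*P + θ^2*M ≤ ((1+η) - θ*(1+α)*η)^2/(1+η)^2 * E := by
  have hA1 : (0:ℝ) < 1+α := by linarith
  have h2η : (0:ℝ) < 1+2*η := by linarith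
  have h1η : (0:ℝ) < 1+η := by linarith
  have hP0 : 0 ≤ P := by
    nlinarith [mul_nonneg h1η.le hM, mul_nonneg (mul_nonneg hη.le (sq_nonneg (1+α))) hE,
      mul_pos h2η hA1]
  have hq2 : ((1+η)*M + η*(1+α)^2*E)^2 ≤ (1+2*η)^2*(1+α)^2*(M*E) := by
    have h3 : ((1+η)*M + η*(1+α)^2*E)^2 ≤ ((1+2*η)*(1+α)*P)^2 := by
      apply pow_le_pow_left₀ _ h1 2
      positivity
    calc ((1+η)*M + η*(1+α)^2*E)^2 ≤ ((1+2*η)*(1+α)*P)^2 := h3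
      _ = (1+2*η)^2*(1+α)^2*P^2 := by ring
      _ ≤ (1+2*η)^2*(1+α)^2*(M*E) := by
          apply mul_le_mul_of_nonneg_left hCS
          positivity
  have hB2 : η^2*(1+α)^2*E ≤ (1+η)^2*M := by
    by_contra hcon
    push_neg at hcon
    have hMw : M < (1+α)^2*E := by nlinarith
    nlinarith [mul_pos (sub_pos.mpr hcon) (sub_pos.mpr hMw), hq2]
  have hkey : θ*((1+η)^2*M - η^2*(1+α)^2*E) ≤ 2*(1+η)^2*P - 2*(1+α)*η*(1+η)*E := by
    have t1 : 0 ≤ (1+2*η)*(1+α)*P - ((1+η)*M + η*(1+α)^2*E) := sub_nonneg.mpr h1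
    have t2 : 0 ≤ 2*(1+η) - θ*(1+α)*(1+2*η) := sub_nonneg.mpr hΘ
    have t3 : 0 ≤ (1+η)^2*M - η^2*(1+α)^2*E := sub_nonneg.mpr hB2
    have hcomb : 0 ≤ 2*(1+η)^2 * ((1+2*η)*(1+α)*P - ((1+η)*M + η*(1+α)^2*E))
        + (2*(1+η) - θ*(1+α)*(1+2*η)) * ((1+η)^2*M - η^2*(1+α)^2*E) :=
      add_nonneg (mul_nonneg (by positivity) t1) (mul_nonneg t2 t3)
    have hc : (0:ℝ) < (1+α)*(1+2*η) := by positivity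
    nlinarith [hcomb, hc]
  have hfin := mul_le_mul_of_nonneg_left hkey hθ.le
  rw [div_mul_eq_mul_div, le_div_iff₀ (by positivity : (0:ℝ) < (1+η)^2)]
  nlinarith [hfin]

lemma sq_le_of_le3 {L a b c : ℝ} (hL : 0 ≤ L) (h : L ≤ a + b + c) :
    L^2 ≤ 3*(a^2 + b^2 + c^2) := by
  nlinarith [sq_nonneg (a-b), sq_nonneg (b-c), sq_nonneg (a-c), mul_self_le_mul_self hL h]

lemma transfer_real {γ' α μ μt na nm nb : ℝ} (hγ : 0 ≤ γ') (hμt : 0 < μt) (hμ : μt < μ)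
    (hT : γ'*(μ*μt) ≤ α*(μ - μt)) (hb : nb ≤ na + nm)
    (hna : 0 ≤ na) (hnm : 0 ≤ nm) (hnb : 0 ≤ nb) :
    γ'*(μt*nb^2) ≤ γ'*(μ*na^2) + α*nm^2 := by
  have hb2 : nb^2 ≤ (na + nm)^2 := by nlinarith
  nlinarith [mul_nonneg hγ (sq_nonneg ((μ - μt)*na - μt*nm)),
    mul_nonneg (mul_nonneg hγ hμt.le) (sub_nonneg.mpr hb2),
    mul_nonneg (sub_nonneg.mpr hT) (sq_nonneg nm),
    sub_pos.mpr hμ]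

set_option maxHeartbeats 2000000 in
/-- Linear convergence of the primal-dual Douglas–Rachford method with mismatched adjoint.
Here `BΣ(x, y) = (μ̃_G x + V*y, μ̃_{F*} y − Ax)` (written componentwise, with the Hilbert
product norm `‖(x,y)‖² = ‖x‖² + ‖y‖²`), `ℓ` is a Lipschitz bound and `σ` a strong
monotonicity constant for `BΣ`, and the rate is `(1 + (1 − θ(1+α))η)/(1+η)` with
`η = (4γ/27)·min{υ/(1+2α)², σ/(4γ²ℓ² + (α + γ max{μ̃_G, μ̃_{F*}})²)}`. -/
theorem pddr_mismatch_linear_convergence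
    {X Y : Type*} [NormedAddCommGroup X] [InnerProductSpace ℝ X] [CompleteSpace X]
    [NormedAddCommGroup Y] [InnerProductSpace ℝ Y] [CompleteSpace Y]
    (A V : X →L[ℝ] Y) (G : X → ℝ) (Fs : Y → ℝ) (γG γFs : ℝ)
    (hG : IsStronglyConvex γG G) (hFs : IsStronglyConvex γFs Fs)
    (μG μFs μtG μtFs : ℝ)
    (hμtG : 0 < μtG) (hμG : μtG < μG) (hμGγ : μG < γG)
    (hμtFs : 0 < μtFs) (hμFs : μtFs < μFs) (hμFsγ : μFs < γFs)
    (hmm : (1 / 4) * ‖A - V‖ ^ 2 ≤ μtG * μtFs)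
    (c : ℝ) (hc : c = min ((μG - μtG) / (μG * μtG)) ((μFs - μtFs) / (μFs * μtFs)))
    (υ : ℝ) (hυ : υ = min (γG - μG) (γFs - μFs))
    (τ : ℝ) (hτ0 : 0 < τ) (hτ1 : τ < 1 / ‖A - V‖) (hτc : τ < c)
    (α : ℝ) (hα0 : 0 < α) (hα : τ / (c - τ) ≤ α)
    (γ : ℝ) (hγ : γ = (1 + α) * τ)
    (ℓ : ℝ) (hℓ0 : 0 < ℓ)
    (hℓ : ∀ (x : X) (y : Y),
      ‖μtG • x + (ContinuousLinearMap.adjoint V) y‖ ^ 2 + ‖μtFs • y - A x‖ ^ 2 ≤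
        ℓ ^ 2 * (‖x‖ ^ 2 + ‖y‖ ^ 2))
    (σ : ℝ) (hσ0 : 0 < σ)
    (hσ : ∀ (x : X) (y : Y),
      σ * (‖x‖ ^ 2 + ‖y‖ ^ 2) ≤
        ⟪μtG • x + (ContinuousLinearMap.adjoint V) y, x⟫ + ⟪μtFs • y - A x, y⟫)
    (η : ℝ)
    (hη : η = (4 * γ / 27) * min (υ / (1 + 2 * α) ^ 2)
      (σ / (4 * γ ^ 2 * ℓ ^ 2 + (α + γ * max μtG μtFs) ^ 2)))
    (θ : ℝ) (hθ0 : 0 < θ) (hθ : θ * (1 + α) ≤ 2 * (1 + η) / (1 + 2 * η))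
    (PG : X → X) (PF : Y → Y)
    (hPG : ∀ p z, G (PG p) + ⟪(1 / τ) • (p - PG p), z - PG p⟫ ≤ G z)
    (hPF : ∀ q z, Fs (PF q) + ⟪(1 / τ) • (q - PF q), z - PF q⟫ ≤ Fs z)
    (x v p : ℕ → X) (y w q : ℕ → Y)
    (hx : ∀ k, x (k + 1) = PG (p k))
    (hy : ∀ k, y (k + 1) = PF (q k))
    (hv : ∀ k, v (k + 1) + τ • (ContinuousLinearMap.adjoint V) (w (k + 1)) =
      (2 : ℝ) • x (k + 1) - p k)
    (hw : ∀ k, w (k + 1) - τ • A (v (k + 1)) = (2 : ℝ) • y (k + 1) - q k)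
    (hp : ∀ k, p (k + 1) = p k + θ • (v (k + 1) - x (k + 1)))
    (hq : ∀ k, q (k + 1) = q k + θ • (w (k + 1) - y (k + 1)))
    (xh : X) (yh : Y)
    (hxh : IsSubgradientAt G (-(ContinuousLinearMap.adjoint V) yh) xh)
    (hyh : IsSubgradientAt Fs (A xh) yh) :
    ∃ C : ℝ, 0 ≤ C ∧ ∀ N : ℕ,
      Real.sqrt (‖x N - xh‖ ^ 2 + ‖y N - yh‖ ^ 2) ≤
        C * ((1 + (1 - θ * (1 + α)) * η) / (1 + η)) ^ N := by
  classical
  set Vs := ContinuousLinearMap.adjoint V with hVsdef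
  set ph : X := xh - τ • Vs yh with hph
  set qh : Y := yh + τ • (A xh) with hqh
  have hγG : 0 < γG := hG.1
  have hγFs : 0 < γFs := hFs.1
  have hμG0 : 0 < μG := hμtG.trans hμG
  have hμFs0 : 0 < μFs := hμtFs.trans hμFs
  have hυ0 : 0 < υ := by rw [hυ]; exact lt_min (by linarith) (by linarith)
  have hγ0 : 0 < γ := by rw [hγ]; exact mul_pos (by linarith) hτ0
  have hmax0 : 0 < max μtG μtFs := lt_of_lt_of_le hμtG (le_max_left _ _)
  have hJ0 : 0 < α + γ * max μtG μtFs := by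
    have := mul_pos hγ0 hmax0; linarith
  have hD0 : 0 < 4*γ^2*ℓ^2 + (α + γ * max μtG μtFs)^2 :=
    add_pos_of_nonneg_of_pos (by positivity) (pow_pos hJ0 2)
  have h12 : (0:ℝ) < (1+2*α)^2 := pow_pos (by linarith) 2
  have hη0 : 0 < η := by
    rw [hη]
    exact mul_pos (by positivity) (lt_min (div_pos hυ0 h12) (div_pos hσ0 hD0))
  have h1η : (0:ℝ) < 1+η := by linarith
  have h2η : (0:ℝ) < 1+2*η := by linarith
  have hcoef1 : 3*η*(1+2*α)^2 ≤ γ*υ := by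
    have hm1 : η ≤ 4*γ/27 * (υ/(1+2*α)^2) := by
      rw [hη]; exact mul_le_mul_of_nonneg_left (min_le_left _ _) (by positivity)
    have hm2 := mul_le_mul_of_nonneg_right hm1 h12.le
    have hr : 4*γ/27 * (υ/(1+2*α)^2) * (1+2*α)^2 = 4*γ/27*υ := by
      field_simp
    rw [hr] at hm2
    linarith [mul_pos hγ0 hυ0]
  have hcoef2 : 3*η*((α + γ*max μtG μtFs)^2 + γ^2*ℓ^2) ≤ γ*σ := by
    have hm1 : η ≤ 4*γ/27 * (σ/(4*γ^2*ℓ^2 + (α + γ * max μtG μtFs)^2)) := by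
      rw [hη]; exact mul_le_mul_of_nonneg_left (min_le_right _ _) (by positivity)
    have hm2 := mul_le_mul_of_nonneg_right hm1 hD0.le
    have hr : 4*γ/27 * (σ/(4*γ^2*ℓ^2 + (α + γ * max μtG μtFs)^2))
        * (4*γ^2*ℓ^2 + (α + γ * max μtG μtFs)^2) = 4*γ/27*σ := by
      field_simp
    rw [hr] at hm2
    have hmono : η*((α + γ*max μtG μtFs)^2 + γ^2*ℓ^2)
        ≤ η*(4*γ^2*ℓ^2 + (α + γ * max μtG μtFs)^2) := by
      apply mul_le_mul_of_nonneg_left _ hη0.le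
      linarith [sq_nonneg (γ*ℓ)]
    linarith [mul_pos hγ0 hσ0, mul_le_mul_of_nonneg_left hmono (by norm_num : (0:ℝ) ≤ 3)]
  have hγαc : γ ≤ α * c := by
    have hct : 0 < c - τ := by linarith
    have h5 := (div_le_iff₀ hct).mp hα
    rw [hγ]; linarith
  have hTG : γ * (μG*μtG) ≤ α * (μG - μtG) := by
    have ha1 : c ≤ (μG - μtG)/(μG*μtG) := by rw [hc]; exact min_le_left _ _
    have h3 : (0:ℝ) < μG*μtG := mul_pos hμG0 hμtG
    have h2 : γ ≤ α * ((μG - μtG)/(μG*μtG)) :=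
      le_trans hγαc (mul_le_mul_of_nonneg_left ha1 hα0.le)
    have h4 := mul_le_mul_of_nonneg_right h2 h3.le
    calc γ * (μG*μtG) ≤ α * ((μG - μtG)/(μG*μtG)) * (μG*μtG) := h4
      _ = α * (μG - μtG) := by field_simp
  have hTF : γ * (μFs*μtFs) ≤ α * (μFs - μtFs) := by
    have ha1 : c ≤ (μFs - μtFs)/(μFs*μtFs) := by rw [hc]; exact min_le_right _ _
    have h3 : (0:ℝ) < μFs*μtFs := mul_pos hμFs0 hμtFs
    have h2 : γ ≤ α * ((μFs - μtFs)/(μFs*μtFs)) :=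
      le_trans hγαc (mul_le_mul_of_nonneg_left ha1 hα0.le)
    have h4 := mul_le_mul_of_nonneg_right h2 h3.le
    calc γ * (μFs*μtFs) ≤ α * ((μFs - μtFs)/(μFs*μtFs)) * (μFs*μtFs) := h4
      _ = α * (μFs - μtFs) := by field_simp
  have hΘ : θ*(1+α)*(1+2*η) ≤ 2*(1+η) := by
    rw [le_div_iff₀ h2η] at hθ
    exact hθ
  set R : ℝ := (1 + (1 - θ*(1+α))*η)/(1+η) with hR
  have hRpos : 0 < R := by
    rw [hR]
    apply div_pos _ h1η
    nlinarith [mul_le_mul_of_nonneg_right hΘ hη0.le, hη0, mul_pos hθ0 hα0]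
  -- subgradient strong monotonicity, per step
  have hGmono : ∀ k : ℕ, τ*γG*‖x (k+1) - xh‖^2
      ≤ ⟪(p k - ph) - (x (k+1) - xh), x (k+1) - xh⟫ := by
    intro k
    have hs1 : IsSubgradientAt G ((1/τ) • (p k - x (k+1))) (x (k+1)) := by
      intro z
      rw [hx k]
      exact hPG (p k) z
    have hm := subgrad_mono hG hs1 hxh
    have hd : (p k - ph) - (x (k+1) - xh) = (p k - x (k+1)) + τ • Vs yh := by
      rw [hph]; module
    have hveq : (1/τ) • (p k - x (k+1)) - (-(Vs yh))
        = (1/τ) • ((p k - ph) - (x (k+1) - xh)) := by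
      rw [hd, smul_add, sub_neg_eq_add, smul_smul, one_div,
        inv_mul_cancel₀ (ne_of_gt hτ0), one_smul]
    rw [hveq, real_inner_smul_left] at hm
    have h6 := mul_le_mul_of_nonneg_left hm hτ0.le
    have he : τ * (1/τ * ⟪(p k - ph) - (x (k+1) - xh), x (k+1) - xh⟫)
        = ⟪(p k - ph) - (x (k+1) - xh), x (k+1) - xh⟫ := by
      field_simp
    rw [he] at h6
    linarith [h6]
  have hFmono : ∀ k : ℕ, τ*γFs*‖y (k+1) - yh‖^2
      ≤ ⟪(q k - qh) - (y (k+1) - yh), y (k+1) - yh⟫ := by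
    intro k
    have hs1 : IsSubgradientAt Fs ((1/τ) • (q k - y (k+1))) (y (k+1)) := by
      intro z
      rw [hy k]
      exact hPF (q k) z
    have hm := subgrad_mono hFs hs1 hyh
    have hd : (q k - qh) - (y (k+1) - yh) = (q k - y (k+1)) - τ • (A xh) := by
      rw [hqh]; module
    have hveq : (1/τ) • (q k - y (k+1)) - A xh
        = (1/τ) • ((q k - qh) - (y (k+1) - yh)) := by
      rw [hd, smul_sub (1/τ) (q k - y (k+1)) (τ • (A xh)), smul_smul, one_div,
        inv_mul_cancel₀ (ne_of_gt hτ0), one_smul]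
    rw [hveq, real_inner_smul_left] at hm
    have h6 := mul_le_mul_of_nonneg_left hm hτ0.le
    have he : τ * (1/τ * ⟪(q k - qh) - (y (k+1) - yh), y (k+1) - yh⟫)
        = ⟪(q k - qh) - (y (k+1) - yh), y (k+1) - yh⟫ := by
      field_simp
    rw [he] at h6
    linarith [h6]
  -- shadow sequence domination
  have hshadow : ∀ k : ℕ, ‖x (k+1) - xh‖^2 + ‖y (k+1) - yh‖^2
      ≤ ‖p k - ph‖^2 + ‖q k - qh‖^2 := by
    intro k
    have h1 := hGmono k
    have h2 := hFmono k
    have hux : ‖x (k+1) - xh‖^2 ≤ ‖p k - ph‖^2 := by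
      rw [inner_sub_left, real_inner_self_eq_norm_sq] at h1
      have hcs := real_inner_le_norm (p k - ph) (x (k+1) - xh)
      have hnn : 0 ≤ τ*γG*‖x (k+1) - xh‖^2 := by positivity
      have h3 : ‖x (k+1) - xh‖^2 ≤ ‖p k - ph‖*‖x (k+1) - xh‖ := by linarith
      linarith [h3, sq_nonneg (‖p k - ph‖ - ‖x (k+1) - xh‖)]
    have huy : ‖y (k+1) - yh‖^2 ≤ ‖q k - qh‖^2 := by
      rw [inner_sub_left, real_inner_self_eq_norm_sq] at h2
      have hcs := real_inner_le_norm (q k - qh) (y (k+1) - yh)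
      have hnn : 0 ≤ τ*γFs*‖y (k+1) - yh‖^2 := by positivity
      have h3 : ‖y (k+1) - yh‖^2 ≤ ‖q k - qh‖*‖y (k+1) - yh‖ := by linarith
      linarith [h3, sq_nonneg (‖q k - qh‖ - ‖y (k+1) - yh‖)]
    linarith
    -- the one-step contraction
  have key : ∀ k : ℕ, ‖p (k+1) - ph‖^2 + ‖q (k+1) - qh‖^2
      ≤ R^2 * (‖p k - ph‖^2 + ‖q k - qh‖^2) := by
    intro k
    set ax := x (k+1) - xh with haxd
    set ay := y (k+1) - yh with hayd
    set bx := v (k+1) - xh with hbxd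
    set by' := w (k+1) - yh with hbyd
    set dx := p k - ph with hdxd
    set dy := q k - qh with hdyd
    have hGx : τ*γG*‖ax‖^2 ≤ ⟪dx - ax, ax⟫ := hGmono k
    have hGy : τ*γFs*‖ay‖^2 ≤ ⟪dy - ay, ay⟫ := hFmono k
    have hVb : τ • (Vs by') = (2:ℝ) • ax - bx - dx := by
      have h2 : τ • (Vs (w (k+1))) = (2:ℝ) • x (k+1) - p k - v (k+1) := by
        rw [← hv k]; abel
      rw [hbyd, haxd, hbxd, hdxd, hph, map_sub, smul_sub, h2]
      module
    have hAb : τ • (A bx) = dy + by' - (2:ℝ) • ay := by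
      have h2 : τ • (A (v (k+1))) = w (k+1) - ((2:ℝ) • y (k+1) - q k) := by
        rw [← hw k]; abel
      rw [hbxd, hayd, hbyd, hdyd, hqh, map_sub, smul_sub, h2]
      module
    have hKx : ⟪(2:ℝ)•ax - bx - dx, bx⟫ = τ * ⟪Vs by', bx⟫ := by
      rw [← hVb, real_inner_smul_left]
    have hKy : ⟪(2:ℝ)•ay - by' - dy, by'⟫ = -(τ * ⟪A bx, by'⟫) := by
      have h3 : (2:ℝ)•ay - by' - dy = -(τ • (A bx)) := by
        rw [hAb]; module
      rw [h3, inner_neg_left, real_inner_smul_left]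
    have hσb := hσ bx by'
    have hσb' : τ*(σ*(‖bx‖^2+‖by'‖^2)) - τ*(μtG*‖bx‖^2) - τ*(μtFs*‖by'‖^2)
        ≤ ⟪(2:ℝ)•ax - bx - dx, bx⟫ + ⟪(2:ℝ)•ay - by' - dy, by'⟫ := by
      rw [hKx, hKy]
      have hexp : ⟪μtG • bx + Vs by', bx⟫ + ⟪μtFs • by' - A bx, by'⟫
          = μtG*‖bx‖^2 + ⟪Vs by', bx⟫ + (μtFs*‖by'‖^2 - ⟪A bx, by'⟫) := by
        rw [inner_add_left, inner_sub_left, real_inner_smul_left, real_inner_smul_left,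
          real_inner_self_eq_norm_sq, real_inner_self_eq_norm_sq]
      rw [hexp] at hσb
      linarith [mul_le_mul_of_nonneg_left hσb hτ0.le]
    have hIDx : ⟪ax - bx, dx⟫ = ⟪dx - ax, ax⟫ + ⟪(2:ℝ)•ax - bx - dx, bx⟫ + ‖ax - bx‖^2 :=
      inner_dr_id ax bx dx
    have hIDy : ⟪ay - by', dy⟫ = ⟪dy - ay, ay⟫ + ⟪(2:ℝ)•ay - by' - dy, by'⟫ + ‖ay - by'‖^2 :=
      inner_dr_id ay by' dy
    -- transfer inequalities
    have htrG : (1+α)*τ*(μtG*‖bx‖^2) ≤ (1+α)*τ*(μG*‖ax‖^2) + α*‖ax - bx‖^2 := by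
      have h0 : ‖ax - (ax - bx)‖ ≤ ‖ax‖ + ‖ax - bx‖ := norm_sub_le _ _
      have h1 : ax - (ax - bx) = bx := by abel
      rw [h1] at h0
      have hγ' : (1+α)*τ = γ := hγ.symm
      rw [hγ']
      exact transfer_real hγ0.le hμtG hμG hTG h0 (norm_nonneg _) (norm_nonneg _) (norm_nonneg _)
    have htrF : (1+α)*τ*(μtFs*‖by'‖^2) ≤ (1+α)*τ*(μFs*‖ay‖^2) + α*‖ay - by'‖^2 := by
      have h0 : ‖ay - (ay - by')‖ ≤ ‖ay‖ + ‖ay - by'‖ := norm_sub_le _ _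
      have h1 : ay - (ay - by') = by' := by abel
      rw [h1] at h0
      have hγ' : (1+α)*τ = γ := hγ.symm
      rw [hγ']
      exact transfer_real hγ0.le hμtFs hμFs hTF h0 (norm_nonneg _) (norm_nonneg _) (norm_nonneg _)
    -- lower bound for (1+α)P − M
    have hS : γ*υ*(‖ax‖^2+‖ay‖^2) + γ*σ*(‖bx‖^2+‖by'‖^2)
        ≤ (1+α)*(⟪ax - bx, dx⟫ + ⟪ay - by', dy⟫) - (‖ax - bx‖^2 + ‖ay - by'‖^2) := by
      have hPsum : (1+α)*(⟪ax - bx, dx⟫ + ⟪ay - by', dy⟫)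
          = (1+α)*(⟪dx - ax, ax⟫ + ⟪dy - ay, ay⟫)
          + (1+α)*(⟪(2:ℝ)•ax - bx - dx, bx⟫ + ⟪(2:ℝ)•ay - by' - dy, by'⟫)
          + (1+α)*(‖ax - bx‖^2 + ‖ay - by'‖^2) := by
        rw [hIDx, hIDy]; ring
      have hυG : υ ≤ γG - μG := by rw [hυ]; exact min_le_left _ _
      have hυF : υ ≤ γFs - μFs := by rw [hυ]; exact min_le_right _ _
      have hA1 : (0:ℝ) ≤ 1+α := by linarith
      have hGx' := mul_le_mul_of_nonneg_left hGx hA1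
      have hGy' := mul_le_mul_of_nonneg_left hGy hA1
      have hσb'' := mul_le_mul_of_nonneg_left hσb' hA1
      have hτA : (0:ℝ) ≤ (1+α)*τ := by positivity
      have hυG' : 0 ≤ (1+α)*τ*((γG - μG) - υ)*‖ax‖^2 := by
        apply mul_nonneg (mul_nonneg hτA (by linarith)) (sq_nonneg _)
      have hυF' : 0 ≤ (1+α)*τ*((γFs - μFs) - υ)*‖ay‖^2 := by
        apply mul_nonneg (mul_nonneg hτA (by linarith)) (sq_nonneg _)
      rw [hγ]
      linarith [hGx', hGy', hσb'', htrG, htrF, hPsum.le, hPsum.ge, hυG', hυF']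
    -- the quadratic bound on the correction vector
    have hBVx : γ • (Vs by') = (1+α) • ((2:ℝ)•ax - bx - dx) := by
      rw [hγ, mul_smul, hVb]
    have hBVy : γ • (A bx) = (1+α) • (dy + by' - (2:ℝ)•ay) := by
      rw [hγ, mul_smul, hAb]
    have hVix : (1+α) • dx - (ax - bx)
        = (1+2*α)•ax - (α - γ*μtG)•bx - γ•(μtG•bx + Vs by') := by
      rw [smul_add, smul_smul, hBVx]; module
    have hViy : (1+α) • dy - (ay - by')
        = (1+2*α)•ay - (α - γ*μtFs)•by' - γ•(μtFs•by' - A bx) := by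
      rw [smul_sub γ (μtFs•by') (A bx), smul_smul, hBVy]; module
    have habs : |α - γ*μtG| ≤ α + γ*max μtG μtFs := by
      have e1 : γ*μtG ≤ γ*max μtG μtFs := mul_le_mul_of_nonneg_left (le_max_left _ _) hγ0.le
      have e2 : (0:ℝ) ≤ γ*μtG := by positivity
      rw [abs_le]; constructor <;> linarith
    have habs' : |α - γ*μtFs| ≤ α + γ*max μtG μtFs := by
      have e1 : γ*μtFs ≤ γ*max μtG μtFs := mul_le_mul_of_nonneg_left (le_max_right _ _) hγ0.le
      have e2 : (0:ℝ) ≤ γ*μtFs := by positivity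
      rw [abs_le]; constructor <;> linarith
    have hnx : ‖(1+α) • dx - (ax - bx)‖
        ≤ (1+2*α)*‖ax‖ + (α + γ*max μtG μtFs)*‖bx‖ + γ*‖μtG•bx + Vs by'‖ := by
      rw [hVix]
      have t1 : ‖(1+2*α)•ax - (α - γ*μtG)•bx - γ•(μtG•bx + Vs by')‖
          ≤ ‖(1+2*α)•ax - (α - γ*μtG)•bx‖ + ‖γ•(μtG•bx + Vs by')‖ := norm_sub_le _ _
      have t2 : ‖(1+2*α)•ax - (α - γ*μtG)•bx‖ ≤ ‖(1+2*α)•ax‖ + ‖(α - γ*μtG)•bx‖ :=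
        norm_sub_le _ _
      have e1 : ‖(1+2*α)•ax‖ = (1+2*α)*‖ax‖ := by
        rw [norm_smul, Real.norm_eq_abs, abs_of_pos (by linarith : (0:ℝ) < 1+2*α)]
      have e3 : ‖γ•(μtG•bx + Vs by')‖ = γ*‖μtG•bx + Vs by'‖ := by
        rw [norm_smul, Real.norm_eq_abs, abs_of_pos hγ0]
      have e2 : ‖(α - γ*μtG)•bx‖ ≤ (α + γ*max μtG μtFs)*‖bx‖ := by
        rw [norm_smul, Real.norm_eq_abs]
        exact mul_le_mul_of_nonneg_right habs (norm_nonneg _)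
      linarith
    have hny : ‖(1+α) • dy - (ay - by')‖
        ≤ (1+2*α)*‖ay‖ + (α + γ*max μtG μtFs)*‖by'‖ + γ*‖μtFs•by' - A bx‖ := by
      rw [hViy]
      have t1 : ‖(1+2*α)•ay - (α - γ*μtFs)•by' - γ•(μtFs•by' - A bx)‖
          ≤ ‖(1+2*α)•ay - (α - γ*μtFs)•by'‖ + ‖γ•(μtFs•by' - A bx)‖ := norm_sub_le _ _
      have t2 : ‖(1+2*α)•ay - (α - γ*μtFs)•by'‖ ≤ ‖(1+2*α)•ay‖ + ‖(α - γ*μtFs)•by'‖ :=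
        norm_sub_le _ _
      have e1 : ‖(1+2*α)•ay‖ = (1+2*α)*‖ay‖ := by
        rw [norm_smul, Real.norm_eq_abs, abs_of_pos (by linarith : (0:ℝ) < 1+2*α)]
      have e3 : ‖γ•(μtFs•by' - A bx)‖ = γ*‖μtFs•by' - A bx‖ := by
        rw [norm_smul, Real.norm_eq_abs, abs_of_pos hγ0]
      have e2 : ‖(α - γ*μtFs)•by'‖ ≤ (α + γ*max μtG μtFs)*‖by'‖ := by
        rw [norm_smul, Real.norm_eq_abs]
        exact mul_le_mul_of_nonneg_right habs' (norm_nonneg _)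
      linarith
    have hnx2 : ‖(1+α) • dx - (ax - bx)‖^2
        ≤ 3*((1+2*α)^2*‖ax‖^2 + (α + γ*max μtG μtFs)^2*‖bx‖^2
            + γ^2*‖μtG•bx + Vs by'‖^2) := by
      have h0 := norm_nonneg ((1+α) • dx - (ax - bx))
      have h5 := sq_le_of_le3 h0 hnx
      linarith [h5]
    have hny2 : ‖(1+α) • dy - (ay - by')‖^2
        ≤ 3*((1+2*α)^2*‖ay‖^2 + (α + γ*max μtG μtFs)^2*‖by'‖^2
            + γ^2*‖μtFs•by' - A bx‖^2) := by
      have h0 := norm_nonneg ((1+α) • dy - (ay - by'))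
      have h5 := sq_le_of_le3 h0 hny
      linarith [h5]
    have hℓb := hℓ bx by'
    have hVexpx : ‖(1+α) • dx - (ax - bx)‖^2
        = (1+α)^2*‖dx‖^2 - 2*(1+α)*⟪ax - bx, dx⟫ + ‖ax - bx‖^2 := by
      rw [norm_sub_sq_real, real_inner_smul_left, real_inner_comm dx (ax - bx),
        norm_smul, Real.norm_eq_abs, abs_of_pos (by linarith : (0:ℝ) < 1+α), mul_pow]
      ring
    have hVexpy : ‖(1+α) • dy - (ay - by')‖^2
        = (1+α)^2*‖dy‖^2 - 2*(1+α)*⟪ay - by', dy⟫ + ‖ay - by'‖^2 := by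
      rw [norm_sub_sq_real, real_inner_smul_left, real_inner_comm dy (ay - by'),
        norm_smul, Real.norm_eq_abs, abs_of_pos (by linarith : (0:ℝ) < 1+α), mul_pow]
      ring
    have h1 : (1+η)*(‖ax - bx‖^2 + ‖ay - by'‖^2)
        + η*(1+α)^2*(‖dx‖^2 + ‖dy‖^2)
        ≤ (1+2*η)*(1+α)*(⟪ax - bx, dx⟫ + ⟪ay - by', dy⟫) := by
      have hVV : ‖(1+α) • dx - (ax - bx)‖^2 + ‖(1+α) • dy - (ay - by')‖^2
          ≤ 3*(1+2*α)^2*(‖ax‖^2+‖ay‖^2)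
            + 3*((α + γ*max μtG μtFs)^2 + γ^2*ℓ^2)*(‖bx‖^2+‖by'‖^2) := by
        linarith [hnx2, hny2, mul_le_mul_of_nonneg_left hℓb (by positivity : (0:ℝ) ≤ 3*γ^2)]
      have hVη := mul_le_mul_of_nonneg_left hVV hη0.le
      have hNa : (0:ℝ) ≤ ‖ax‖^2+‖ay‖^2 := by positivity
      have hNb : (0:ℝ) ≤ ‖bx‖^2+‖by'‖^2 := by positivity
      have hc1 := mul_le_mul_of_nonneg_right hcoef1 hNa
      have hc2 := mul_le_mul_of_nonneg_right hcoef2 hNb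
      have hfinal : η*(((1+α)^2*‖dx‖^2 - 2*(1+α)*⟪ax - bx, dx⟫ + ‖ax - bx‖^2)
          + ((1+α)^2*‖dy‖^2 - 2*(1+α)*⟪ay - by', dy⟫ + ‖ay - by'‖^2))
          ≤ (1+α)*(⟪ax - bx, dx⟫ + ⟪ay - by', dy⟫) - (‖ax - bx‖^2 + ‖ay - by'‖^2) := by
        rw [← hVexpx, ← hVexpy]
        calc η*(‖(1+α) • dx - (ax - bx)‖^2 + ‖(1+α) • dy - (ay - by')‖^2)
            ≤ γ*υ*(‖ax‖^2+‖ay‖^2) + γ*σ*(‖bx‖^2+‖by'‖^2) := by linarith [hVη, hc1, hc2]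
          _ ≤ _ := hS
      linarith [hfinal]
    have hCS : (⟪ax - bx, dx⟫ + ⟪ay - by', dy⟫)^2
        ≤ (‖ax - bx‖^2 + ‖ay - by'‖^2)*(‖dx‖^2 + ‖dy‖^2) := by
      have c1 := abs_real_inner_le_norm (ax - bx) dx
      have c2 := abs_real_inner_le_norm (ay - by') dy
      have c3 : |⟪ax - bx, dx⟫ + ⟪ay - by', dy⟫| ≤ ‖ax - bx‖*‖dx‖ + ‖ay - by'‖*‖dy‖ :=
        (abs_add_le _ _).trans (add_le_add c1 c2)
      have c4 : (⟪ax - bx, dx⟫ + ⟪ay - by', dy⟫)^2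
          ≤ (‖ax - bx‖*‖dx‖ + ‖ay - by'‖*‖dy‖)^2 := by
        rw [← sq_abs]; exact pow_le_pow_left₀ (abs_nonneg _) c3 2
      linarith [c4, sq_nonneg (‖ax - bx‖*‖dy‖ - ‖ay - by'‖*‖dx‖)]
    have hM0 : (0:ℝ) ≤ ‖ax - bx‖^2 + ‖ay - by'‖^2 := by positivity
    have hE0 : (0:ℝ) ≤ ‖dx‖^2 + ‖dy‖^2 := by positivity
    have hrs := rate_step η α θ (‖ax - bx‖^2 + ‖ay - by'‖^2)
      (⟪ax - bx, dx⟫ + ⟪ay - by', dy⟫) (‖dx‖^2 + ‖dy‖^2)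
      hη0 hα0 hθ0 hΘ hM0 hE0 hCS h1
    have hpk1 : p (k+1) - ph = dx - θ • (ax - bx) := by
      rw [hp k, hdxd, haxd, hbxd]; module
    have hqk1 : q (k+1) - qh = dy - θ • (ay - by') := by
      rw [hq k, hdyd, hayd, hbyd]; module
    have hnp : ‖p (k+1) - ph‖^2 = ‖dx‖^2 - 2*θ*⟪ax - bx, dx⟫ + θ^2*‖ax - bx‖^2 := by
      rw [hpk1, norm_sub_sq_real, real_inner_smul_right, real_inner_comm dx (ax - bx),
        norm_smul, Real.norm_eq_abs, mul_pow, sq_abs]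
      ring
    have hnq : ‖q (k+1) - qh‖^2 = ‖dy‖^2 - 2*θ*⟪ay - by', dy⟫ + θ^2*‖ay - by'‖^2 := by
      rw [hqk1, norm_sub_sq_real, real_inner_smul_right, real_inner_comm dy (ay - by'),
        norm_smul, Real.norm_eq_abs, mul_pow, sq_abs]
      ring
    have hR2 : R^2 = ((1+η) - θ*(1+α)*η)^2/(1+η)^2 := by
      rw [hR, div_pow]
      congr 1
      ring
    rw [hnp, hnq, hR2]
    linarith [hrs]
    -- geometric decay
  have hdecay : ∀ N : ℕ, ‖p N - ph‖^2 + ‖q N - qh‖^2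
      ≤ (‖p 0 - ph‖^2 + ‖q 0 - qh‖^2) * (R^2)^N := by
    intro N
    induction N with
    | zero => simp
    | succ n ih =>
      calc ‖p (n+1) - ph‖^2 + ‖q (n+1) - qh‖^2
          ≤ R^2 * (‖p n - ph‖^2 + ‖q n - qh‖^2) := key n
        _ ≤ R^2 * ((‖p 0 - ph‖^2 + ‖q 0 - qh‖^2) * (R^2)^n) :=
            mul_le_mul_of_nonneg_left ih (sq_nonneg R)
        _ = (‖p 0 - ph‖^2 + ‖q 0 - qh‖^2) * (R^2)^(n+1) := by ring
  have hE00 : (0:ℝ) ≤ ‖p 0 - ph‖^2 + ‖q 0 - qh‖^2 := by positivity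
  refine ⟨max (Real.sqrt (‖x 0 - xh‖^2 + ‖y 0 - yh‖^2))
      (Real.sqrt (‖p 0 - ph‖^2 + ‖q 0 - qh‖^2) / R),
    le_trans (Real.sqrt_nonneg _) (le_max_left _ _), ?_⟩
  intro N
  cases N with
  | zero =>
    simpa using le_max_left (Real.sqrt (‖x 0 - xh‖^2 + ‖y 0 - yh‖^2))
      (Real.sqrt (‖p 0 - ph‖^2 + ‖q 0 - qh‖^2) / R)
  | succ k =>
    have h1 : ‖x (k+1) - xh‖^2 + ‖y (k+1) - yh‖^2
        ≤ (‖p 0 - ph‖^2 + ‖q 0 - qh‖^2) * (R^2)^k :=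
      le_trans (hshadow k) (hdecay k)
    have h3 : (‖p 0 - ph‖^2 + ‖q 0 - qh‖^2) * (R^2)^k
        = (Real.sqrt (‖p 0 - ph‖^2 + ‖q 0 - qh‖^2) * R^k)^2 := by
      rw [mul_pow, Real.sq_sqrt hE00, ← pow_mul, ← pow_mul, Nat.mul_comm]
    have h2 : Real.sqrt (‖x (k+1) - xh‖^2 + ‖y (k+1) - yh‖^2)
        ≤ Real.sqrt (‖p 0 - ph‖^2 + ‖q 0 - qh‖^2) * R^k := by
      have := Real.sqrt_le_sqrt (h3 ▸ h1)
      rwa [Real.sqrt_sq (by positivity)] at this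
    have h5 : Real.sqrt (‖p 0 - ph‖^2 + ‖q 0 - qh‖^2) * R^k
        = (Real.sqrt (‖p 0 - ph‖^2 + ‖q 0 - qh‖^2) / R) * R^(k+1) := by
      rw [pow_succ]
      field_simp
      ring
    calc Real.sqrt (‖x (k+1) - xh‖^2 + ‖y (k+1) - yh‖^2)
        ≤ Real.sqrt (‖p 0 - ph‖^2 + ‖q 0 - qh‖^2) * R^k := h2
      _ = (Real.sqrt (‖p 0 - ph‖^2 + ‖q 0 - qh‖^2) / R) * R^(k+1) := h5
      _ ≤ max (Real.sqrt (‖x 0 - xh‖^2 + ‖y 0 - yh‖^2))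
            (Real.sqrt (‖p 0 - ph‖^2 + ‖q 0 - qh‖^2) / R) * R^(k+1) :=
          mul_le_mul_of_nonneg_right (le_max_right _ _) (pow_nonneg hRpos.le _)
end
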